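/- arXiv:1907.01352 — 3 statements merged into one kernel-verified Lean document; each statement's English description precedes it below -/
import Mathlib

section
/- Let γ, θ ∈ (0,1) with γ + θ > 1. There exists a constant C > 0 such that for all b > 0 and all u ∈ ℝ: ∫₀^∞ (b + |x − u|)^{−γ} (b + x)^{−θ} dx ≤ C (b + |u|)^{1−γ−θ}. Consequently there exists C' > 0 such that for all b > 0 and all u, v ∈ ℝ: ∫_ℝ (b + |x − u|)^{−γ} (b + |x − v|)^{−θ} dx ≤ C' (b + |u − v|)^{1−γ−θ}. -/
open MeasureTheory Set

lemma contF1 {b σ : ℝ} (hb : 0 < b) {c : ℝ} (hc : 0 ≤ c) :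
    IntegrableOn (fun x : ℝ => (b + x) ^ (-σ)) (Ioc 0 c) := by
  have hco : ContinuousOn (fun x : ℝ => (b + x) ^ (-σ)) (Icc 0 c) := by
    apply ContinuousOn.rpow_const (by fun_prop)
    intro x hx
    exact Or.inl (by nlinarith [hx.1])
  exact (hco.integrableOn_Icc).mono_set Ioc_subset_Icc_self

lemma F1 {b σ : ℝ} (hb : 0 < b) (hσ0 : 0 < σ) (hσ1 : σ < 1) {c : ℝ} (hc : 0 ≤ c) :
    ∫⁻ x in Ioc (0:ℝ) c, ENNReal.ofReal ((b + x) ^ (-σ)) ≤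
      ENNReal.ofReal ((b + c) ^ (1 - σ) / (1 - σ)) := by
  rw [← ofReal_integral_eq_lintegral_ofReal (contF1 hb hc)
    (by filter_upwards [ae_restrict_mem measurableSet_Ioc] with x hx using
      Real.rpow_nonneg (by nlinarith [hx.1]) _)]
  apply ENNReal.ofReal_le_ofReal
  have h1 : ∫ x in Ioc (0:ℝ) c, (b + x) ^ (-σ) = ∫ x in (0:ℝ)..c, (b + x) ^ (-σ) :=
    (intervalIntegral.integral_of_le hc).symm
  have h2 : ∫ x in (0:ℝ)..c, (b + x) ^ (-σ) = ∫ x in (b+0:ℝ)..(b+c), x ^ (-σ) :=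
    intervalIntegral.integral_comp_add_left (fun x => x ^ (-σ)) b
  have h3 : ∫ x in (b+0:ℝ)..(b+c), x ^ (-σ) = ((b+c) ^ (-σ+1) - (b+0) ^ (-σ+1)) / (-σ+1) :=
    integral_rpow (Or.inl (by linarith))
  rw [h1, h2, h3]
  have hb1 : (0:ℝ) ≤ (b+0) ^ (-σ+1) := Real.rpow_nonneg (by linarith) _
  have : (-σ+1 : ℝ) = 1 - σ := by ring
  rw [this]
  rw [this] at hb1
  gcongr <;> linarith

lemma F2 {b ρ : ℝ} (hb : 0 < b) (hρ : 1 < ρ) {c : ℝ} (hc : 0 ≤ c) :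
    ∫⁻ x in Ioi c, ENNReal.ofReal ((b + x) ^ (-ρ)) ≤
      ENNReal.ofReal ((b + c) ^ (1 - ρ) / (ρ - 1)) := by
  have hshift : ∫⁻ x in Ioi c, ENNReal.ofReal ((b + x) ^ (-ρ)) =
      ∫⁻ x in Ioi (c + b), ENNReal.ofReal (x ^ (-ρ)) := by
    have := (measurePreserving_add_right (volume : Measure ℝ) b).setLIntegral_comp_preimage_emb
      (measurableEmbedding_addRight b) (fun x => ENNReal.ofReal (x ^ (-ρ))) (Ioi (c + b))
    simp only [preimage_add_const_Ioi, add_sub_cancel_right] at this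
    rw [← this]
    apply lintegral_congr
    intro x
    rw [add_comm b x]
  rw [hshift]
  have hcb : 0 < c + b := by linarith
  have hint : IntegrableOn (fun x : ℝ => x ^ (-ρ)) (Ioi (c + b)) :=
    integrableOn_Ioi_rpow_of_lt (by linarith) hcb
  rw [← ofReal_integral_eq_lintegral_ofReal hint
    (by filter_upwards [ae_restrict_mem measurableSet_Ioi] with x hx using
      Real.rpow_nonneg (by linarith [mem_Ioi.mp hx]) _)]
  apply ENNReal.ofReal_le_ofReal
  rw [integral_Ioi_rpow_of_lt (by linarith) hcb]
  have h1 : (-ρ + 1 : ℝ) = 1 - ρ := by ring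
  rw [h1, add_comm c b]
  apply le_of_eq
  have h2 : (1 - ρ : ℝ) ≠ 0 := by linarith
  have h3 : (ρ - 1 : ℝ) ≠ 0 := by linarith
  field_simp
  ring

lemma F3 {b γ : ℝ} (hb : 0 < b) (hγ0 : 0 < γ) (hγ1 : γ < 1) {u : ℝ} (hu : 0 < u) :
    ∫⁻ x in Ioc (u/2) (2*u), ENNReal.ofReal ((b + |x - u|) ^ (-γ)) ≤
      ENNReal.ofReal (2 * ((b + u) ^ (1 - γ) / (1 - γ))) := by
  have hshift : ∫⁻ x in Ioc (u/2) (2*u), ENNReal.ofReal ((b + |x - u|) ^ (-γ)) =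
      ∫⁻ x in Ioc (u/2 - u) (2*u - u), ENNReal.ofReal ((b + |x|) ^ (-γ)) := by
    have := (measurePreserving_add_right (volume : Measure ℝ) u).setLIntegral_comp_preimage_emb
      (measurableEmbedding_addRight u) (fun x => ENNReal.ofReal ((b + |x - u|) ^ (-γ)))
      (Ioc (u/2) (2*u))
    rw [Set.preimage_add_const_Ioc] at this
    rw [← this]
    apply lintegral_congr
    intro x
    rw [add_sub_cancel_right]
  rw [hshift]
  have h1 : u/2 - u ≤ 0 := by linarith
  have h2 : (0:ℝ) ≤ 2*u - u := by linarith
  rw [← Ioc_union_Ioc_eq_Ioc h1 h2, lintegral_union measurableSet_Ioc (Ioc_disjoint_Ioc_of_le le_rfl)]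
  have key : ∀ c : ℝ, 0 ≤ c → c ≤ u → ∫⁻ x in Ioc (0:ℝ) c, ENNReal.ofReal ((b + |x|) ^ (-γ)) ≤
      ENNReal.ofReal ((b + u) ^ (1 - γ) / (1 - γ)) := by
    intro c hc hcu
    rw [setLIntegral_congr_fun_ae measurableSet_Ioc (ae_of_all _ fun x hx =>
      by rw [abs_of_pos hx.1])]
    refine (F1 hb hγ0 hγ1 hc).trans (ENNReal.ofReal_le_ofReal ?_)
    gcongr <;> linarith
  have hY : (0:ℝ) ≤ (b + u) ^ (1 - γ) / (1 - γ) :=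
    div_nonneg (Real.rpow_nonneg (by linarith) _) (by linarith)
  have hrefl : ∫⁻ x in Ioc (u/2 - u) 0, ENNReal.ofReal ((b + |x|) ^ (-γ)) =
      ∫⁻ x in Ico (0:ℝ) (u - u/2), ENNReal.ofReal ((b + |x|) ^ (-γ)) := by
    have := (Measure.measurePreserving_neg (volume : Measure ℝ)).setLIntegral_comp_preimage_emb
      (MeasurableEquiv.neg ℝ).measurableEmbedding
      (fun x => ENNReal.ofReal ((b + |x|) ^ (-γ))) (Ico (0:ℝ) (u - u/2))
    rw [← this]
    have hpre : (Neg.neg : ℝ → ℝ) ⁻¹' Ico (0:ℝ) (u - u/2) = Ioc (u/2 - u) 0 := by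
      ext x
      simp only [mem_preimage, mem_Ico, mem_Ioc]
      constructor <;> intro h <;> constructor <;> linarith [h.1, h.2]
    rw [hpre]
    apply lintegral_congr
    intro x
    simp [abs_neg]
  calc (∫⁻ x in Ioc (u/2 - u) 0, ENNReal.ofReal ((b + |x|) ^ (-γ))) +
        ∫⁻ x in Ioc (0:ℝ) (2*u - u), ENNReal.ofReal ((b + |x|) ^ (-γ))
      ≤ ENNReal.ofReal ((b + u) ^ (1 - γ) / (1 - γ)) +
        ENNReal.ofReal ((b + u) ^ (1 - γ) / (1 - γ)) := by
        apply add_le_add ?_ (key _ (by linarith) (by linarith))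
        rw [hrefl, setLIntegral_congr Ico_ae_eq_Ioc]
        exact key _ (by linarith) (by linarith)
    _ = ENNReal.ofReal (2 * ((b + u) ^ (1 - γ) / (1 - γ))) := by
        rw [← ENNReal.ofReal_add hY hY, two_mul]

lemma rpow_mul_div {x a c d : ℝ} (hx : 0 < x) : x ^ a * (x ^ c / d) = 1/d * x ^ (a + c) := by
  rw [Real.rpow_add hx]; ring

lemma half_bound {x t s : ℝ} (hx : 0 < x) (hs : 0 ≤ s) (hs1 : s ≤ 1) (h : x/2 ≤ t) :
    t ^ (-s) ≤ 2 * x ^ (-s) := by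
  have hx2 : 0 < x/2 := by linarith
  have h1 : t ^ (-s) ≤ (x/2) ^ (-s) :=
    Real.rpow_le_rpow_of_nonpos hx2 h (neg_nonpos.mpr hs)
  have h2 : (x/2) ^ (-s) = x ^ (-s) * 2 ^ s := by
    rw [Real.div_rpow hx.le (by norm_num), Real.rpow_neg (by norm_num : (0:ℝ) ≤ 2),
      div_inv_eq_mul]
  have h3 : (2:ℝ) ^ s ≤ 2 := by
    calc (2:ℝ) ^ s ≤ 2 ^ (1:ℝ) := Real.rpow_le_rpow_of_exponent_le one_le_two hs1
    _ = 2 := Real.rpow_one 2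
  nlinarith [Real.rpow_nonneg hx.le (-s)]

lemma keyK {γ θ : ℝ} (hγ0 : 0 < γ) (hγ1 : γ < 1) (hθ0 : 0 < θ) (hθ1 : θ < 1)
    (hγθ : 1 < γ + θ) {b : ℝ} (hb : 0 < b) (u : ℝ) :
    ∫⁻ x in Ioi (0:ℝ), ENNReal.ofReal ((b + |x - u|) ^ (-γ) * (b + x) ^ (-θ)) ≤
      ENNReal.ofReal ((2/(1-θ) + 4/(1-γ) + 2/(γ+θ-1)) * (b + |u|) ^ (1-γ-θ)) := by
  have hR : 0 < b + |u| := by positivity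
  have hRp : (0:ℝ) ≤ (b + |u|) ^ (1-γ-θ) := Real.rpow_nonneg hR.le _
  rcases le_or_gt u 0 with hu | hu
  · -- u ≤ 0
    have habs : |u| = -u := abs_of_nonpos hu
    rw [← Ioc_union_Ioi_eq_Ioi (abs_nonneg u),
      lintegral_union measurableSet_Ioi (Ioc_disjoint_Ioi le_rfl)]
    have p1 : ∫⁻ x in Ioc (0:ℝ) |u|, ENNReal.ofReal ((b + |x - u|) ^ (-γ) * (b + x) ^ (-θ)) ≤
        ENNReal.ofReal (1/(1-θ) * (b + |u|) ^ (1-γ-θ)) := by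
      calc ∫⁻ x in Ioc (0:ℝ) |u|, ENNReal.ofReal ((b + |x - u|) ^ (-γ) * (b + x) ^ (-θ))
          ≤ ∫⁻ x in Ioc (0:ℝ) |u|,
            ENNReal.ofReal ((b + |u|) ^ (-γ)) * ENNReal.ofReal ((b + x) ^ (-θ)) := by
            apply setLIntegral_mono' measurableSet_Ioc
            intro x hx
            rw [← ENNReal.ofReal_mul (Real.rpow_nonneg hR.le _)]
            apply ENNReal.ofReal_le_ofReal
            apply mul_le_mul_of_nonneg_right ?_ (Real.rpow_nonneg (by linarith [hx.1]) _)
            apply Real.rpow_le_rpow_of_nonpos hR ?_ (by linarith)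
            have h1 : |x - u| = x - u := abs_of_pos (by linarith [hx.1])
            rw [h1, habs]; linarith [hx.1]
        _ = ENNReal.ofReal ((b + |u|) ^ (-γ)) *
              ∫⁻ x in Ioc (0:ℝ) |u|, ENNReal.ofReal ((b + x) ^ (-θ)) :=
            lintegral_const_mul' _ _ ENNReal.ofReal_ne_top
        _ ≤ ENNReal.ofReal ((b + |u|) ^ (-γ)) *
              ENNReal.ofReal ((b + |u|) ^ (1 - θ) / (1 - θ)) := by
            gcongr
            exact F1 hb hθ0 hθ1 (abs_nonneg u)
        _ = ENNReal.ofReal (1/(1-θ) * (b + |u|) ^ (1-γ-θ)) := by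
            rw [← ENNReal.ofReal_mul (Real.rpow_nonneg hR.le _), rpow_mul_div hR]
            congr 2
            ring
    have p2 : ∫⁻ x in Ioi |u|, ENNReal.ofReal ((b + |x - u|) ^ (-γ) * (b + x) ^ (-θ)) ≤
        ENNReal.ofReal (1/(γ+θ-1) * (b + |u|) ^ (1-γ-θ)) := by
      calc ∫⁻ x in Ioi |u|, ENNReal.ofReal ((b + |x - u|) ^ (-γ) * (b + x) ^ (-θ))
          ≤ ∫⁻ x in Ioi |u|, ENNReal.ofReal ((b + x) ^ (-(γ+θ))) := by
            apply setLIntegral_mono' measurableSet_Ioi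
            intro x hx
            apply ENNReal.ofReal_le_ofReal
            have hx0 : 0 < x := lt_of_le_of_lt (abs_nonneg u) hx
            have hbx : 0 < b + x := by linarith
            have h1 : (b + |x - u|) ^ (-γ) ≤ (b + x) ^ (-γ) := by
              apply Real.rpow_le_rpow_of_nonpos hbx ?_ (by linarith)
              have : |x - u| = x - u := abs_of_pos (by linarith)
              rw [this]; linarith
            calc (b + |x - u|) ^ (-γ) * (b + x) ^ (-θ)
                ≤ (b + x) ^ (-γ) * (b + x) ^ (-θ) :=
                  mul_le_mul_of_nonneg_right h1 (Real.rpow_nonneg hbx.le _)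
              _ = (b + x) ^ (-(γ+θ)) := by
                  rw [← Real.rpow_add hbx]; ring_nf
        _ ≤ ENNReal.ofReal ((b + |u|) ^ (1 - (γ+θ)) / (γ+θ-1)) :=
            F2 hb hγθ (abs_nonneg u)
        _ = ENNReal.ofReal (1/(γ+θ-1) * (b + |u|) ^ (1-γ-θ)) := by
            rw [show (1 - (γ+θ)) = 1-γ-θ by ring]
            congr 1
            ring
    calc (∫⁻ x in Ioc (0:ℝ) |u|, ENNReal.ofReal ((b + |x - u|) ^ (-γ) * (b + x) ^ (-θ))) +
          ∫⁻ x in Ioi |u|, ENNReal.ofReal ((b + |x - u|) ^ (-γ) * (b + x) ^ (-θ))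
        ≤ ENNReal.ofReal (1/(1-θ) * (b + |u|) ^ (1-γ-θ)) +
          ENNReal.ofReal (1/(γ+θ-1) * (b + |u|) ^ (1-γ-θ)) := add_le_add p1 p2
      _ ≤ ENNReal.ofReal ((2/(1-θ) + 4/(1-γ) + 2/(γ+θ-1)) * (b + |u|) ^ (1-γ-θ)) := by
          have h1 : (0:ℝ) < 1 - θ := by linarith
          have h2 : (0:ℝ) < 1 - γ := by linarith
          have h3 : (0:ℝ) < γ + θ - 1 := by linarith
          rw [← ENNReal.ofReal_add (mul_nonneg (div_nonneg zero_le_one h1.le) hRp)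
            (mul_nonneg (div_nonneg zero_le_one h3.le) hRp)]
          apply ENNReal.ofReal_le_ofReal
          have hc : 1/(1-θ) + 1/(γ+θ-1) ≤ 2/(1-θ) + 4/(1-γ) + 2/(γ+θ-1) := by
            have e1 : 1/(1-θ) ≤ 2/(1-θ) := by gcongr <;> norm_num
            have e2 : 1/(γ+θ-1) ≤ 2/(γ+θ-1) := by gcongr <;> norm_num
            have e3 : (0:ℝ) ≤ 4/(1-γ) := by positivity
            linarith
          nlinarith [hRp, mul_le_mul_of_nonneg_right hc hRp]
  · -- 0 < u
    have habs : |u| = u := abs_of_pos hu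
    rw [habs] at hR hRp ⊢
    have h1 : (0:ℝ) < 1 - θ := by linarith
    have h2 : (0:ℝ) < 1 - γ := by linarith
    have h3 : (0:ℝ) < γ + θ - 1 := by linarith
    have hset : Ioc (0:ℝ) (u/2) ∪ Ioc (u/2) (2*u) = Ioc 0 (2*u) :=
      Ioc_union_Ioc_eq_Ioc (by linarith) (by linarith)
    rw [← Ioc_union_Ioi_eq_Ioi (show (0:ℝ) ≤ 2*u by linarith),
      lintegral_union measurableSet_Ioi (Ioc_disjoint_Ioi le_rfl), ← hset,
      lintegral_union measurableSet_Ioc (Ioc_disjoint_Ioc_of_le le_rfl)]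
    have pA : ∫⁻ x in Ioc (0:ℝ) (u/2), ENNReal.ofReal ((b + |x - u|) ^ (-γ) * (b + x) ^ (-θ)) ≤
        ENNReal.ofReal (2/(1-θ) * (b + u) ^ (1-γ-θ)) := by
      calc ∫⁻ x in Ioc (0:ℝ) (u/2), ENNReal.ofReal ((b + |x - u|) ^ (-γ) * (b + x) ^ (-θ))
          ≤ ∫⁻ x in Ioc (0:ℝ) (u/2),
            ENNReal.ofReal (2 * (b + u) ^ (-γ)) * ENNReal.ofReal ((b + x) ^ (-θ)) := by
            apply setLIntegral_mono' measurableSet_Ioc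
            intro x hx
            rw [← ENNReal.ofReal_mul (by positivity)]
            apply ENNReal.ofReal_le_ofReal
            apply mul_le_mul_of_nonneg_right ?_ (Real.rpow_nonneg (by linarith [hx.1]) _)
            apply half_bound hR hγ0.le hγ1.le
            have : |x - u| = u - x := by rw [abs_sub_comm]; exact abs_of_pos (by linarith [hx.2])
            rw [this]; linarith [hx.2]
        _ = ENNReal.ofReal (2 * (b + u) ^ (-γ)) *
              ∫⁻ x in Ioc (0:ℝ) (u/2), ENNReal.ofReal ((b + x) ^ (-θ)) :=
            lintegral_const_mul' _ _ ENNReal.ofReal_ne_top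
        _ ≤ ENNReal.ofReal (2 * (b + u) ^ (-γ)) *
              ENNReal.ofReal ((b + u) ^ (1 - θ) / (1 - θ)) := by
            gcongr
            refine (F1 hb hθ0 hθ1 (by linarith)).trans (ENNReal.ofReal_le_ofReal ?_)
            gcongr <;> linarith
        _ = ENNReal.ofReal (2/(1-θ) * (b + u) ^ (1-γ-θ)) := by
            rw [← ENNReal.ofReal_mul (by positivity)]
            congr 1
            rw [mul_assoc, rpow_mul_div hR, show -γ + (1-θ) = 1-γ-θ by ring]
            ring
    have pB : ∫⁻ x in Ioc (u/2) (2*u), ENNReal.ofReal ((b + |x - u|) ^ (-γ) * (b + x) ^ (-θ)) ≤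
        ENNReal.ofReal (4/(1-γ) * (b + u) ^ (1-γ-θ)) := by
      calc ∫⁻ x in Ioc (u/2) (2*u), ENNReal.ofReal ((b + |x - u|) ^ (-γ) * (b + x) ^ (-θ))
          ≤ ∫⁻ x in Ioc (u/2) (2*u),
            ENNReal.ofReal (2 * (b + u) ^ (-θ)) * ENNReal.ofReal ((b + |x - u|) ^ (-γ)) := by
            apply setLIntegral_mono' measurableSet_Ioc
            intro x hx
            rw [← ENNReal.ofReal_mul (by positivity)]
            apply ENNReal.ofReal_le_ofReal
            rw [mul_comm (2 * (b + u) ^ (-θ))]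
            apply mul_le_mul_of_nonneg_left ?_ (Real.rpow_nonneg (by positivity) _)
            apply half_bound hR hθ0.le hθ1.le
            linarith [hx.1]
        _ = ENNReal.ofReal (2 * (b + u) ^ (-θ)) *
              ∫⁻ x in Ioc (u/2) (2*u), ENNReal.ofReal ((b + |x - u|) ^ (-γ)) :=
            lintegral_const_mul' _ _ ENNReal.ofReal_ne_top
        _ ≤ ENNReal.ofReal (2 * (b + u) ^ (-θ)) *
              ENNReal.ofReal (2 * ((b + u) ^ (1 - γ) / (1 - γ))) := by
            gcongr
            exact F3 hb hγ0 hγ1 hu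
        _ = ENNReal.ofReal (4/(1-γ) * (b + u) ^ (1-γ-θ)) := by
            rw [← ENNReal.ofReal_mul (by positivity)]
            congr 1
            rw [show 2 * (b + u) ^ (-θ) * (2 * ((b + u) ^ (1 - γ) / (1 - γ))) =
              4 * ((b + u) ^ (-θ) * ((b + u) ^ (1 - γ) / (1 - γ))) by ring,
              rpow_mul_div hR, show -θ + (1-γ) = 1-γ-θ by ring]
            ring
    have pC : ∫⁻ x in Ioi (2*u), ENNReal.ofReal ((b + |x - u|) ^ (-γ) * (b + x) ^ (-θ)) ≤
        ENNReal.ofReal (2/(γ+θ-1) * (b + u) ^ (1-γ-θ)) := by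
      calc ∫⁻ x in Ioi (2*u), ENNReal.ofReal ((b + |x - u|) ^ (-γ) * (b + x) ^ (-θ))
          ≤ ∫⁻ x in Ioi (2*u), ENNReal.ofReal 2 * ENNReal.ofReal ((b + x) ^ (-(γ+θ))) := by
            apply setLIntegral_mono' measurableSet_Ioi
            intro x hx
            have hxm : 2*u < x := mem_Ioi.mp hx
            have hx0 : 0 < x := by linarith
            have hbx : 0 < b + x := by linarith
            rw [← ENNReal.ofReal_mul (by norm_num)]
            apply ENNReal.ofReal_le_ofReal
            have hax : |x - u| = x - u := abs_of_pos (by linarith)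
            have hh : (b + |x - u|) ^ (-γ) ≤ 2 * (b + x) ^ (-γ) := by
              apply half_bound hbx hγ0.le hγ1.le
              rw [hax]
              linarith
            calc (b + |x - u|) ^ (-γ) * (b + x) ^ (-θ)
                ≤ 2 * (b + x) ^ (-γ) * (b + x) ^ (-θ) :=
                  mul_le_mul_of_nonneg_right hh (Real.rpow_nonneg hbx.le _)
              _ = 2 * (b + x) ^ (-(γ+θ)) := by
                  rw [mul_assoc, ← Real.rpow_add hbx]; ring_nf
        _ = ENNReal.ofReal 2 * ∫⁻ x in Ioi (2*u), ENNReal.ofReal ((b + x) ^ (-(γ+θ))) :=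
            lintegral_const_mul' _ _ ENNReal.ofReal_ne_top
        _ ≤ ENNReal.ofReal 2 * ENNReal.ofReal ((b + u) ^ (1 - (γ+θ)) / (γ+θ-1)) := by
            gcongr
            refine (F2 hb hγθ (by linarith)).trans (ENNReal.ofReal_le_ofReal ?_)
            exact (div_le_div_iff_of_pos_right h3).mpr
              (Real.rpow_le_rpow_of_nonpos hR (by linarith) (by linarith))
        _ = ENNReal.ofReal (2/(γ+θ-1) * (b + u) ^ (1-γ-θ)) := by
            rw [← ENNReal.ofReal_mul (by norm_num)]
            congr 1
            rw [show (1 - (γ+θ)) = 1-γ-θ by ring]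
            ring
    calc (∫⁻ x in Ioc (0:ℝ) (u/2), ENNReal.ofReal ((b + |x - u|) ^ (-γ) * (b + x) ^ (-θ))) +
          (∫⁻ x in Ioc (u/2) (2*u), ENNReal.ofReal ((b + |x - u|) ^ (-γ) * (b + x) ^ (-θ))) +
          ∫⁻ x in Ioi (2*u), ENNReal.ofReal ((b + |x - u|) ^ (-γ) * (b + x) ^ (-θ))
        ≤ ENNReal.ofReal (2/(1-θ) * (b + u) ^ (1-γ-θ)) +
          ENNReal.ofReal (4/(1-γ) * (b + u) ^ (1-γ-θ)) +
          ENNReal.ofReal (2/(γ+θ-1) * (b + u) ^ (1-γ-θ)) :=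
          add_le_add (add_le_add pA pB) pC
      _ = ENNReal.ofReal ((2/(1-θ) + 4/(1-γ) + 2/(γ+θ-1)) * (b + u) ^ (1-γ-θ)) := by
          rw [← ENNReal.ofReal_add (mul_nonneg (div_nonneg (by norm_num) h1.le) hRp)
              (mul_nonneg (div_nonneg (by norm_num) h2.le) hRp),
            ← ENNReal.ofReal_add (add_nonneg (mul_nonneg (div_nonneg (by norm_num) h1.le) hRp)
              (mul_nonneg (div_nonneg (by norm_num) h2.le) hRp))
              (mul_nonneg (div_nonneg (by norm_num) h3.le) hRp)]
          congr 1
          ring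


/-- A useful bound on an integral: for `γ, θ ∈ (0,1)` with `γ + θ > 1` there is `C > 0`
with `∫₀^∞ (b+|x−u|)^{−γ} (b+x)^{−θ} dx ≤ C (b+|u|)^{1−γ−θ}` for all `b > 0`, `u ∈ ℝ`;
consequently there is `C' > 0` with
`∫_ℝ (b+|x−u|)^{−γ} (b+|x−v|)^{−θ} dx ≤ C' (b+|u−v|)^{1−γ−θ}` for all `b > 0`, `u, v ∈ ℝ`. -/
theorem integral_bound_rpow (γ θ : ℝ) (hγ : γ ∈ Set.Ioo (0 : ℝ) 1)
    (hθ : θ ∈ Set.Ioo (0 : ℝ) 1) (hγθ : 1 < γ + θ) :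
    (∃ C : ℝ, 0 < C ∧ ∀ b u : ℝ, 0 < b →
      (∫ x in Set.Ioi (0 : ℝ), (b + |x - u|) ^ (-γ) * (b + x) ^ (-θ)) ≤
        C * (b + |u|) ^ (1 - γ - θ)) ∧
    (∃ C' : ℝ, 0 < C' ∧ ∀ b u v : ℝ, 0 < b →
      (∫ x : ℝ, (b + |x - u|) ^ (-γ) * (b + |x - v|) ^ (-θ)) ≤
        C' * (b + |u - v|) ^ (1 - γ - θ)) := by
  obtain ⟨hγ0, hγ1⟩ := hγ
  obtain ⟨hθ0, hθ1⟩ := hθ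
  have h1 : (0:ℝ) < 1 - θ := by linarith
  have h2 : (0:ℝ) < 1 - γ := by linarith
  have h3 : (0:ℝ) < γ + θ - 1 := by linarith
  have hC0 : (0:ℝ) < 2/(1-θ) + 4/(1-γ) + 2/(γ+θ-1) :=
    add_pos (add_pos (div_pos (by norm_num) h1) (div_pos (by norm_num) h2))
      (div_pos (by norm_num) h3)
  have hexp : (1:ℝ) - γ - θ = 1-γ-θ := rfl
  constructor
  · refine ⟨2/(1-θ) + 4/(1-γ) + 2/(γ+θ-1), hC0, ?_⟩
    intro b u hb
    have hR : (0:ℝ) < b + |u| := by positivity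
    have hnn : 0 ≤ᵐ[volume.restrict (Set.Ioi (0:ℝ))]
        fun x => (b + |x - u|) ^ (-γ) * (b + x) ^ (-θ) := by
      filter_upwards [ae_restrict_mem measurableSet_Ioi] with x hx
      have hx0 : (0:ℝ) < x := hx
      exact mul_nonneg (Real.rpow_nonneg (by nlinarith [abs_nonneg (x - u)]) _)
        (Real.rpow_nonneg (by linarith) _)
    have hmeas : AEStronglyMeasurable (fun x => (b + |x - u|) ^ (-γ) * (b + x) ^ (-θ))
        (volume.restrict (Set.Ioi (0:ℝ))) :=
      (by fun_prop : Measurable fun x : ℝ => (b + |x - u|) ^ (-γ) * (b + x) ^ (-θ))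
        |>.aestronglyMeasurable
    rw [MeasureTheory.integral_eq_lintegral_of_nonneg_ae hnn hmeas]
    exact ENNReal.toReal_le_of_le_ofReal
      (mul_nonneg hC0.le (Real.rpow_nonneg hR.le _))
      (keyK hγ0 hγ1 hθ0 hθ1 hγθ hb u)
  · refine ⟨2 * (2/(1-θ) + 4/(1-γ) + 2/(γ+θ-1)), by linarith, ?_⟩
    intro b u v hb
    have hR : (0:ℝ) < b + |u - v| := by positivity
    have hnn : 0 ≤ᵐ[(volume : Measure ℝ)]
        fun x => (b + |x - u|) ^ (-γ) * (b + |x - v|) ^ (-θ) :=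
      Filter.Eventually.of_forall fun x =>
        mul_nonneg (Real.rpow_nonneg (by nlinarith [abs_nonneg (x - u)]) _)
          (Real.rpow_nonneg (by nlinarith [abs_nonneg (x - v)]) _)
    have hmeas : AEStronglyMeasurable
        (fun x => (b + |x - u|) ^ (-γ) * (b + |x - v|) ^ (-θ)) (volume : Measure ℝ) :=
      (by fun_prop : Measurable fun x : ℝ => (b + |x - u|) ^ (-γ) * (b + |x - v|) ^ (-θ))
        |>.aestronglyMeasurable
    rw [MeasureTheory.integral_eq_lintegral_of_nonneg_ae hnn hmeas]
    apply ENNReal.toReal_le_of_le_ofReal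
      (mul_nonneg (by linarith) (Real.rpow_nonneg hR.le _))
    have step1 : (∫⁻ x : ℝ, ENNReal.ofReal ((b + |x - u|) ^ (-γ) * (b + |x - v|) ^ (-θ))) =
        ∫⁻ x : ℝ, ENNReal.ofReal ((b + |x - (u - v)|) ^ (-γ) * (b + |x|) ^ (-θ)) := by
      rw [← lintegral_add_right_eq_self
        (fun x => ENNReal.ofReal ((b + |x - u|) ^ (-γ) * (b + |x - v|) ^ (-θ))) v]
      apply lintegral_congr
      intro x
      rw [show x + v - u = x - (u - v) by ring, show x + v - v = x by ring]
    rw [step1, ← lintegral_add_compl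
      (fun x : ℝ => ENNReal.ofReal ((b + |x - (u - v)|) ^ (-γ) * (b + |x|) ^ (-θ)))
      (measurableSet_Iio (a := (0:ℝ))), Set.compl_Iio]
    have hIci : ∫⁻ x in Set.Ici (0:ℝ),
        ENNReal.ofReal ((b + |x - (u - v)|) ^ (-γ) * (b + |x|) ^ (-θ)) ≤
        ENNReal.ofReal ((2/(1-θ) + 4/(1-γ) + 2/(γ+θ-1)) * (b + |u - v|) ^ (1-γ-θ)) := by
      rw [← setLIntegral_congr Ioi_ae_eq_Ici,
        setLIntegral_congr_fun_ae measurableSet_Ioi (ae_of_all _ fun x (hx : x ∈ Set.Ioi 0) =>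
          by rw [abs_of_pos (show (0:ℝ) < x from hx)] :
          ∀ᵐ x ∂(volume : Measure ℝ), x ∈ Set.Ioi (0:ℝ) →
            ENNReal.ofReal ((b + |x - (u - v)|) ^ (-γ) * (b + |x|) ^ (-θ)) =
            ENNReal.ofReal ((b + |x - (u - v)|) ^ (-γ) * (b + x) ^ (-θ)))]
      exact keyK hγ0 hγ1 hθ0 hθ1 hγθ hb (u - v)
    have hIio : ∫⁻ x in Set.Iio (0:ℝ),
        ENNReal.ofReal ((b + |x - (u - v)|) ^ (-γ) * (b + |x|) ^ (-θ)) ≤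
        ENNReal.ofReal ((2/(1-θ) + 4/(1-γ) + 2/(γ+θ-1)) * (b + |u - v|) ^ (1-γ-θ)) := by
      have hrefl := (Measure.measurePreserving_neg
          (volume : Measure ℝ)).setLIntegral_comp_preimage_emb
        (MeasurableEquiv.neg ℝ).measurableEmbedding
        (fun x : ℝ => ENNReal.ofReal ((b + |x - (u - v)|) ^ (-γ) * (b + |x|) ^ (-θ)))
        (Set.Iio 0)
      have hpre : (Neg.neg : ℝ → ℝ) ⁻¹' Set.Iio 0 = Set.Ioi 0 := by ext x; simp
      rw [hpre] at hrefl
      rw [← hrefl]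
      have hcongr : ∀ᵐ x ∂(volume : Measure ℝ), x ∈ Set.Ioi (0:ℝ) →
          ENNReal.ofReal ((b + |-x - (u - v)|) ^ (-γ) * (b + |-x|) ^ (-θ)) =
          ENNReal.ofReal ((b + |x - (-(u - v))|) ^ (-γ) * (b + x) ^ (-θ)) := by
        apply ae_of_all
        intro x (hx : x ∈ Set.Ioi 0)
        rw [show -x - (u - v) = -(x - (-(u - v))) by ring, abs_neg, abs_neg, abs_of_pos (show (0:ℝ) < x from hx)]
      rw [setLIntegral_congr_fun_ae measurableSet_Ioi hcongr]
      have := keyK hγ0 hγ1 hθ0 hθ1 hγθ hb (-(u - v))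
      rwa [abs_neg] at this
    calc (∫⁻ x in Set.Iio (0:ℝ),
          ENNReal.ofReal ((b + |x - (u - v)|) ^ (-γ) * (b + |x|) ^ (-θ))) +
          ∫⁻ x in Set.Ici (0:ℝ),
          ENNReal.ofReal ((b + |x - (u - v)|) ^ (-γ) * (b + |x|) ^ (-θ))
        ≤ ENNReal.ofReal ((2/(1-θ) + 4/(1-γ) + 2/(γ+θ-1)) * (b + |u - v|) ^ (1-γ-θ)) +
          ENNReal.ofReal ((2/(1-θ) + 4/(1-γ) + 2/(γ+θ-1)) * (b + |u - v|) ^ (1-γ-θ)) :=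
          add_le_add hIio hIci
      _ = ENNReal.ofReal (2 * (2/(1-θ) + 4/(1-γ) + 2/(γ+θ-1)) * (b + |u - v|) ^ (1-γ-θ)) := by
          rw [← ENNReal.ofReal_add (mul_nonneg hC0.le (Real.rpow_nonneg hR.le _))
            (mul_nonneg hC0.le (Real.rpow_nonneg hR.le _))]
          congr 1
          ring
end

section
/- There is a constant C > 0 such that for all L ≥ r ≥ 1 (in fact for all 0 < r ≤ L with r ≥ 1), all z ∈ [0, L − r] and all m, l ∈ ℕ₀: |b_{m,l}^z| ≤ C · √(r/L) · (1 + |r m / L − l|)^{−1}. -/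
open MeasureTheory Real

/-- `ν_k = 1` for `k ≥ 1` and `ν₀ = 2^{−1/2}`. -/
noncomputable def nu (k : ℕ) : ℝ := if k = 0 then 1 / Real.sqrt 2 else 1

/-- The Neumann basis function `𝔫_{k,s}(x) = ν_k √(2/s) cos(π k x / s)` on `[0,s]`. -/
noncomputable def nfun (s : ℝ) (k : ℕ) (x : ℝ) : ℝ :=
  nu k * Real.sqrt (2 / s) * Real.cos (π * (k : ℝ) * x / s)

/-- `b_{m,l}^z = ∫₀^r 𝔫_{m,L}(x + z) 𝔫_{l,r}(x) dx`. -/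
noncomputable def bcoef (L r z : ℝ) (m l : ℕ) : ℝ :=
  ∫ x in Set.Icc (0 : ℝ) r, nfun L m (x + z) * nfun r l x

lemma Jbound1 (a b r : ℝ) (hr : 0 ≤ r) :
    |∫ x in (0:ℝ)..r, Real.cos (a*x + b)| ≤ r := by
  have h := intervalIntegral.norm_integral_le_of_norm_le_const (C := 1)
    (f := fun x => Real.cos (a*x+b)) (a := 0) (b := r)
    (fun x _ => by simpa using Real.abs_cos_le_one (a*x+b))
  simpa [abs_of_nonneg hr] using h

lemma Jbound2 (a b r : ℝ) (ha : a ≠ 0) :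
    |∫ x in (0:ℝ)..r, Real.cos (a*x + b)| ≤ 2 / |a| := by
  have key : (∫ x in (0:ℝ)..r, Real.cos (a*x + b))
      = a⁻¹ * (Real.sin (a*r + b) - Real.sin (a*0 + b)) := by
    rw [intervalIntegral.integral_comp_mul_add Real.cos ha b]
    simp [integral_cos]
  rw [key, abs_mul, abs_inv, div_eq_inv_mul]
  gcongr ?_ * ?_
  · calc |Real.sin (a*r+b) - Real.sin (a*0+b)|
        ≤ |Real.sin (a*r+b)| + |Real.sin (a*0+b)| := abs_sub _ _
      _ ≤ 1 + 1 := add_le_add (Real.abs_sin_le_one _) (Real.abs_sin_le_one _)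
      _ = 2 := by norm_num

lemma Jbound (a b r D : ℝ) (hr : 0 < r) (hD : 0 ≤ D) (hS : π * D ≤ |a| * r) :
    |∫ x in (0:ℝ)..r, Real.cos (a*x + b)| ≤ 2 * r / (1 + D) := by
  rcases le_or_gt D 1 with h | h
  · calc |∫ x in (0:ℝ)..r, Real.cos (a*x+b)| ≤ r := Jbound1 a b r hr.le
      _ ≤ 2*r/(1+D) := by
          rw [le_div_iff₀ (by linarith)]; nlinarith
  · have hpi := Real.pi_gt_three
    have ha : (0:ℝ) < |a| := by nlinarith
    have ha' : a ≠ 0 := fun h0 => by simp [h0] at ha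
    calc |∫ x in (0:ℝ)..r, Real.cos (a*x+b)| ≤ 2/|a| := Jbound2 a b r ha'
      _ ≤ 2*r/(1+D) := by
          rw [div_le_div_iff₀ ha (by linarith)]
          nlinarith

lemma two_cos_cos (u v : ℝ) :
    Real.cos u * Real.cos v = (Real.cos (u - v) + Real.cos (u + v)) / 2 := by
  rw [Real.cos_sub, Real.cos_add]; ring

lemma nu_nonneg (k : ℕ) : 0 ≤ nu k := by
  unfold nu; split <;> positivity

lemma nu_le_one (k : ℕ) : nu k ≤ 1 := by
  unfold nu; split
  · rw [div_le_one (by positivity)]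
    nlinarith [Real.sq_sqrt (by norm_num : (0:ℝ) ≤ 2), Real.sqrt_nonneg 2]
  · exact le_refl 1

set_option maxHeartbeats 1000000 in
/-- There is `C > 0` such that for all `L ≥ r ≥ 1`, `z ∈ [0, L − r]` and `m, l ∈ ℕ₀`:
`|b_{m,l}^z| ≤ C √(r/L) (1 + |rm/L − l|)⁻¹`. -/
theorem bcoef_bound :
    ∃ C : ℝ, 0 < C ∧ ∀ (L r z : ℝ) (m l : ℕ),
      1 ≤ r → r ≤ L → z ∈ Set.Icc 0 (L - r) →
      |bcoef L r z m l| ≤ C * Real.sqrt (r / L) * (1 + |r * (m : ℝ) / L - (l : ℝ)|)⁻¹ := by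
  refine ⟨4, by norm_num, ?_⟩
  intro L r z m l hr hrL _
  have hr0 : (0:ℝ) < r := lt_of_lt_of_le one_pos hr
  have hL0 : (0:ℝ) < L := lt_of_lt_of_le hr0 hrL
  have hrne : r ≠ 0 := hr0.ne'
  have hLne : L ≠ 0 := hL0.ne'
  obtain ⟨α, hα⟩ : ∃ α : ℝ, α = π * (m:ℝ) / L := ⟨_, rfl⟩
  obtain ⟨β, hβ⟩ : ∃ β : ℝ, β = π * (l:ℝ) / r := ⟨_, rfl⟩
  obtain ⟨c, hc⟩ : ∃ c : ℝ, c = nu m * nu l * (Real.sqrt (2/L) * Real.sqrt (2/r)) / 2 := ⟨_, rfl⟩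
  obtain ⟨D, hD⟩ : ∃ D : ℝ, D = |r * (m:ℝ) / L - (l:ℝ)| := ⟨_, rfl⟩
  have hD0 : 0 ≤ D := hD ▸ abs_nonneg _
  have hD1 : (0:ℝ) < 1 + D := by linarith
  -- representation of bcoef
  have int1 : IntervalIntegrable (fun x => Real.cos ((α - β)*x + α*z)) volume 0 r :=
    (Continuous.intervalIntegrable (by continuity) 0 r)
  have int2 : IntervalIntegrable (fun x => Real.cos ((α + β)*x + α*z)) volume 0 r :=
    (Continuous.intervalIntegrable (by continuity) 0 r)
  have hrepr : bcoef L r z m l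
      = c * ((∫ x in (0:ℝ)..r, Real.cos ((α - β)*x + α*z))
           + (∫ x in (0:ℝ)..r, Real.cos ((α + β)*x + α*z))) := by
    rw [bcoef, MeasureTheory.integral_Icc_eq_integral_Ioc,
      ← intervalIntegral.integral_of_le hr0.le,
      ← intervalIntegral.integral_add int1 int2,
      ← intervalIntegral.integral_const_mul]
    apply intervalIntegral.integral_congr
    intro x _
    have e1 : π * (m:ℝ) * (x+z) / L = α*x + α*z := by
      rw [hα]; field_simp
    have e2 : π * (l:ℝ) * x / r = β*x := by
      rw [hβ]; field_simp
    have e3 : (α - β)*x + α*z = (α*x+α*z) - β*x := by ring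
    have e4 : (α + β)*x + α*z = (α*x+α*z) + β*x := by ring
    simp only [nfun, e1, e2, e3, e4, hc]
    linear_combination (nu m * Real.sqrt (2/L) * (nu l * Real.sqrt (2/r))) *
      two_cos_cos (α*x+α*z) (β*x)
  -- bound the two oscillatory integrals
  have h1 : |α - β| * r = π * D := by
    have e : (α - β) * r = π * (r * (m:ℝ) / L - (l:ℝ)) := by
      rw [hα, hβ]; field_simp
    calc |α - β| * r = |(α - β) * r| := by rw [abs_mul, abs_of_nonneg hr0.le]
      _ = |π * (r * (m:ℝ) / L - (l:ℝ))| := by rw [e]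
      _ = π * D := by rw [abs_mul, abs_of_nonneg Real.pi_pos.le, hD]
  have h2 : π * D ≤ |α + β| * r := by
    have hS : (α + β) * r = π * (r * (m:ℝ) / L + (l:ℝ)) := by
      rw [hα, hβ]; field_simp
    have hml : (0:ℝ) ≤ r * (m:ℝ) / L := by positivity
    have hl0 : (0:ℝ) ≤ (l:ℝ) := Nat.cast_nonneg l
    have hDS : D ≤ r * (m:ℝ) / L + (l:ℝ) := by
      rw [hD]
      exact abs_le.mpr ⟨by linarith, by linarith⟩
    have : |α + β| * r = |(α+β)*r| := by
      rw [abs_mul, abs_of_nonneg hr0.le]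
    rw [this, hS, abs_mul, abs_of_nonneg Real.pi_pos.le,
      abs_of_nonneg (by linarith : (0:ℝ) ≤ r * (m:ℝ) / L + (l:ℝ))]
    have := Real.pi_pos
    nlinarith
  have hJ1 : |∫ x in (0:ℝ)..r, Real.cos ((α - β)*x + α*z)| ≤ 2*r/(1+D) :=
    Jbound _ _ r D hr0 hD0 h1.ge
  have hJ2 : |∫ x in (0:ℝ)..r, Real.cos ((α + β)*x + α*z)| ≤ 2*r/(1+D) :=
    Jbound _ _ r D hr0 hD0 h2
  -- bound on c
  have hsqrtLr : (0:ℝ) < Real.sqrt (L*r) := Real.sqrt_pos.mpr (by positivity)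
  have hcval : Real.sqrt (2/L) * Real.sqrt (2/r) = 2 / Real.sqrt (L*r) := by
    rw [← Real.sqrt_mul (by positivity),
      show (2/L)*(2/r) = 4/(L*r) by field_simp; ring,
      Real.sqrt_div (by norm_num : (0:ℝ) ≤ 4),
      show Real.sqrt 4 = 2 by
        rw [show (4:ℝ) = 2^2 by norm_num, Real.sqrt_sq (by norm_num)]]
  have hc_nonneg : 0 ≤ c := by
    rw [hc]
    have := nu_nonneg m; have := nu_nonneg l
    positivity
  have hcle : c ≤ (Real.sqrt (L*r))⁻¹ := by
    rw [hc, hcval]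
    have h1 := nu_le_one m
    have h2 := nu_le_one l
    have h3 := nu_nonneg m
    have h4 := nu_nonneg l
    have hinv : (0:ℝ) ≤ (Real.sqrt (L*r))⁻¹ := by positivity
    calc nu m * nu l * (2 / Real.sqrt (L*r)) / 2
        = nu m * nu l * (Real.sqrt (L*r))⁻¹ := by ring
      _ ≤ 1 * (Real.sqrt (L*r))⁻¹ :=
          mul_le_mul_of_nonneg_right (by nlinarith : nu m * nu l ≤ 1) hinv
      _ = (Real.sqrt (L*r))⁻¹ := one_mul _
  -- the sqrt identity
  have hkey : (Real.sqrt (L*r))⁻¹ * r = Real.sqrt (r/L) := by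
    rw [inv_mul_eq_div, div_eq_iff hsqrtLr.ne', ← Real.sqrt_mul (by positivity),
      show r/L*(L*r) = r^2 by field_simp, Real.sqrt_sq hr0.le]
  -- conclude
  calc |bcoef L r z m l|
      = c * |(∫ x in (0:ℝ)..r, Real.cos ((α - β)*x + α*z))
           + (∫ x in (0:ℝ)..r, Real.cos ((α + β)*x + α*z))| := by
        rw [hrepr, abs_mul, abs_of_nonneg hc_nonneg]
    _ ≤ c * (2*r/(1+D) + 2*r/(1+D)) := by
        gcongr
        exact (abs_add_le _ _).trans (add_le_add hJ1 hJ2)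
    _ ≤ (Real.sqrt (L*r))⁻¹ * (2*r/(1+D) + 2*r/(1+D)) := by
        have hpos : (0:ℝ) ≤ 2*r/(1+D) + 2*r/(1+D) := by positivity
        exact mul_le_mul_of_nonneg_right hcle hpos
    _ = 4 * ((Real.sqrt (L*r))⁻¹ * r) * (1+D)⁻¹ := by
        field_simp
        ring
    _ = 4 * Real.sqrt (r/L) * (1 + |r * (m:ℝ) / L - (l:ℝ)|)⁻¹ := by rw [hkey, hD]
end

section
/- For every δ ∈ (0,1) there exists a constant C > 0 such that for all L ≥ r ≥ 1, all z ∈ [0, L − r], all M ∈ [0, ∞) and all k, l ∈ ℕ₀: (i) if k ≠ l, or if k = l and k ≤ rM/L, then |∑_{m ∈ ℕ₀, m ≥ M} b_{m,k}^z b_{m,l}^z| ≤ C [(1 + |k − rM/L|)^{δ−1} + (1 + |l − rM/L|)^{δ−1}]; and (ii) if k ≠ l, or if k = l and k ≥ rM/L, then |∑_{m ∈ ℕ₀, m < M} b_{m,k}^z b_{m,l}^z| ≤ C [(1 + |k − rM/L|)^{δ−1} + (1 + |l − rM/L|)^{δ−1}]. -/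
open MeasureTheory Real

set_option maxHeartbeats 1000000

section GridSum
open Finset

lemma telescope_step {p α : ℝ} (hp : 1 < p) (hα : 0 < α) (i : ℕ) :
    α * (1 + ((i:ℝ)+1)*α) ^ (-p) ≤
      ((1 + (i:ℝ)*α) ^ (1-p) - (1 + ((i:ℝ)+1)*α) ^ (1-p)) / (p-1) := by
  set a : ℝ := (i:ℝ)*α with ha
  set b : ℝ := ((i:ℝ)+1)*α with hb
  have hab : a < b := by
    simp only [ha, hb]; nlinarith [hα, Nat.cast_nonneg (α := ℝ) i]
  have ha0 : 0 ≤ a := by positivity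
  have hder : ∀ x ∈ Set.Ioo a b, HasDerivAt (fun t : ℝ => (1+t) ^ (1-p))
      ((1-p) * (1+x) ^ (-p)) x := by
    intro x hx
    have hx0 : (0:ℝ) < 1 + x := by nlinarith [hx.1, ha0]
    have h1 : HasDerivAt (fun t : ℝ => 1 + t) 1 x := by
      simpa using (hasDerivAt_id x).const_add 1
    have := (Real.hasDerivAt_rpow_const (p := 1-p) (Or.inl hx0.ne')).comp x h1
    simpa [mul_comm, sub_sub_cancel_left, show (1:ℝ)-p-1 = -p by ring, Function.comp_def] using this
  have hcont : ContinuousOn (fun t : ℝ => (1+t) ^ (1-p)) (Set.Icc a b) := by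
    apply ContinuousOn.rpow_const (by fun_prop)
    intro x hx
    left
    nlinarith [hx.1, ha0]
  obtain ⟨c, hc, hc2⟩ := exists_hasDerivAt_eq_slope (fun t : ℝ => (1+t) ^ (1-p))
      (fun x => (1-p) * (1+x) ^ (-p)) hab hcont hder
  have hcb : (1+c) ^ (-p) ≥ (1+b) ^ (-p) := by
    apply Real.rpow_le_rpow_of_nonpos (by nlinarith [hc.1, ha0]) (by nlinarith [hc.2]) (by linarith)
  have hba : b - a = α := by simp only [ha, hb]; ring
  have : (1-p) * (1+c) ^ (-p) = ((1+b) ^ (1-p) - (1+a) ^ (1-p)) / α := by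
    rw [hc2, hba]
  have hkey : ((1+a) ^ (1-p) - (1+b) ^ (1-p)) = (p-1) * (1+c) ^ (-p) * α := by
    field_simp at this ⊢
    nlinarith [this]
  rw [hkey]
  rw [ge_iff_le] at hcb
  have hp1 : (0:ℝ) < p - 1 := by linarith
  rw [le_div_iff₀ hp1]
  calc α * (1+b) ^ (-p) * (p-1) ≤ α * (1+c)^(-p) * (p-1) := by
        apply mul_le_mul_of_nonneg_right (mul_le_mul_of_nonneg_left hcb hα.le) hp1.le
    _ = (p-1) * (1+c) ^ (-p) * α := by ring

lemma base_sum {p α : ℝ} (hp : 1 < p) (hα : 0 < α) (hα1 : α ≤ 1) (N : ℕ) :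
    ∑ i ∈ Finset.range N, α * (1 + (i:ℝ)*α) ^ (-p) ≤ 1 + 1/(p-1) := by
  have hp1 : (0:ℝ) < p - 1 := by linarith
  cases N with
  | zero => simp; positivity
  | succ n =>
    rw [Finset.sum_range_succ']
    have h0 : α * (1 + ((0:ℕ):ℝ)*α) ^ (-p) ≤ 1 := by
      simp [Real.one_rpow]
      exact hα1
    have hsum : ∑ i ∈ Finset.range n, α * (1 + ((i+1:ℕ):ℝ)*α) ^ (-p) ≤ 1/(p-1) := by
      have hle : ∑ i ∈ Finset.range n, α * (1 + ((i+1:ℕ):ℝ)*α) ^ (-p) ≤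
          ∑ i ∈ Finset.range n,
            ((1 + (i:ℝ)*α) ^ (1-p) - (1 + ((i:ℝ)+1)*α) ^ (1-p)) / (p-1) := by
        apply Finset.sum_le_sum
        intro i _
        have := telescope_step hp hα i
        simpa using this
      have htel : ∑ i ∈ Finset.range n,
          ((1 + (i:ℝ)*α) ^ (1-p) - (1 + ((i:ℝ)+1)*α) ^ (1-p)) / (p-1) =
          ((1 + ((0:ℕ):ℝ)*α) ^ (1-p) - (1 + ((n:ℕ):ℝ)*α) ^ (1-p)) / (p-1) := by
        rw [← Finset.sum_div]
        congr 1
        have := Finset.sum_range_sub' (fun i : ℕ => (1 + (i:ℝ)*α) ^ (1-p)) n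
        simpa [Nat.cast_add, Nat.cast_one] using this
      rw [htel] at hle
      refine hle.trans ?_
      have h1 : (1 + ((0:ℕ):ℝ)*α) ^ (1-p) = 1 := by simp
      have h2 : (0:ℝ) ≤ (1 + ((n:ℕ):ℝ)*α) ^ (1-p) := by positivity
      rw [h1, div_le_div_iff_of_pos_right hp1]
      linarith
    push_cast at h0 hsum ⊢
    linarith

lemma gridsum_le {p α a : ℝ} (hp : 1 < p) (hα : 0 < α) (hα1 : α ≤ 1) (ha : 0 ≤ a) (N : ℕ) :
    ∑ m ∈ Finset.range N, α * (1 + |(m:ℝ)*α - a|) ^ (-p) ≤ 2 * (1 + 1/(p-1)) := by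
  set c : ℕ := ⌈a/α⌉₊ with hc
  have hca : a ≤ (c:ℝ) * α := by
    rw [hc]
    have := Nat.le_ceil (a/α)
    calc a = (a/α)*α := by field_simp
      _ ≤ (⌈a/α⌉₊:ℝ) * α := by gcongr
  set f : ℕ → ℝ := fun m => α * (1 + |(m:ℝ)*α - a|) ^ (-p) with hf
  set g : ℕ → ℝ := fun i => α * (1 + (i:ℝ)*α) ^ (-p) with hg
  have hfg : ∀ m i : ℕ, (i:ℝ)*α ≤ |(m:ℝ)*α - a| → f m ≤ g i := by
    intro m i hle
    simp only [hf, hg]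
    apply mul_le_mul_of_nonneg_left _ hα.le
    apply Real.rpow_le_rpow_of_nonpos (by positivity) (by linarith) (by linarith)
  have hgnn : ∀ i, 0 ≤ g i := fun i => by simp only [hg]; positivity
  rw [← Finset.sum_filter_add_sum_filter_not (Finset.range N) (fun m => c ≤ m) f]
  have hA : ∑ m ∈ (Finset.range N).filter (fun m => c ≤ m), f m ≤ 1 + 1/(p-1) := by
    have h1 : ∀ m ∈ (Finset.range N).filter (fun m => c ≤ m), f m ≤ g (m - c) := by
      intro m hm
      simp only [Finset.mem_filter, Finset.mem_range] at hm
      apply hfg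
      have hcast : ((m - c : ℕ) : ℝ) = (m:ℝ) - c := by
        rw [Nat.cast_sub hm.2]
      rw [hcast]
      have : ((m:ℝ) - c) * α = (m:ℝ)*α - (c:ℝ)*α := by ring
      rw [this]
      rw [le_abs]
      left
      have : (c:ℝ)*α ≤ (m:ℝ)*α → (m:ℝ)*α - (c:ℝ)*α ≤ (m:ℝ)*α - a := fun _ => by linarith
      apply this
      gcongr
      exact_mod_cast hm.2
    calc ∑ m ∈ (Finset.range N).filter (fun m => c ≤ m), f m
        ≤ ∑ m ∈ (Finset.range N).filter (fun m => c ≤ m), g (m - c) :=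
          Finset.sum_le_sum h1
      _ = ∑ i ∈ ((Finset.range N).filter (fun m => c ≤ m)).image (fun m => m - c), g i := by
          rw [Finset.sum_image]
          intro x hx y hy hxy
          simp only [Finset.mem_coe, Finset.mem_filter, Finset.mem_range] at hx hy
          simp only at hxy
          omega
      _ ≤ ∑ i ∈ Finset.range (N + c), g i := by
          apply Finset.sum_le_sum_of_subset_of_nonneg
          · intro i hi
            simp only [Finset.mem_image, Finset.mem_filter, Finset.mem_range] at hi ⊢
            omega
          · intro i _ _; exact hgnn i
      _ ≤ 1 + 1/(p-1) := base_sum hp hα hα1 (N + c)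
  have hB : ∑ m ∈ (Finset.range N).filter (fun m => ¬ c ≤ m), f m ≤ 1 + 1/(p-1) := by
    have h1 : ∀ m ∈ (Finset.range N).filter (fun m => ¬ c ≤ m), f m ≤ g (c - 1 - m) := by
      intro m hm
      simp only [Finset.mem_filter, Finset.mem_range, not_le] at hm
      apply hfg
      have hm1 : m ≤ c - 1 := by omega
      have hcast : ((c - 1 - m : ℕ) : ℝ) = ((c:ℝ) - 1) - m := by
        have : c - 1 - m + m + 1 = c := by omega
        push_cast [Nat.cast_sub (by omega : m ≤ c - 1), Nat.cast_sub (by omega : 1 ≤ c)]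
        ring
      rw [hcast]
      have hlt : ((c:ℝ) - 1) * α < a := by
        have : ((c:ℝ) - 1) < a / α := by
          have h2 : (c - 1 : ℕ) < c := by omega
          have := (Nat.lt_ceil (n := c - 1) (a := a/α)).mp (by omega)
          calc ((c:ℝ) - 1) = ((c - 1 : ℕ) : ℝ) := by
                push_cast [Nat.cast_sub (by omega : 1 ≤ c)]; ring
            _ < a / α := this
        calc ((c:ℝ)-1) * α < (a/α) * α := by gcongr
          _ = a := by field_simp
      rw [le_abs]
      right
      have hmc : (m:ℝ) ≤ (c:ℝ) - 1 := by
        have : ((m:ℕ):ℝ) ≤ ((c-1:ℕ):ℝ) := by exact_mod_cast hm1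
        rwa [Nat.cast_sub (by omega : 1 ≤ c), Nat.cast_one] at this
      nlinarith [hα]
    calc ∑ m ∈ (Finset.range N).filter (fun m => ¬ c ≤ m), f m
        ≤ ∑ m ∈ (Finset.range N).filter (fun m => ¬ c ≤ m), g (c - 1 - m) :=
          Finset.sum_le_sum h1
      _ = ∑ i ∈ ((Finset.range N).filter (fun m => ¬ c ≤ m)).image (fun m => c - 1 - m), g i := by
          rw [Finset.sum_image]
          intro x hx y hy hxy
          simp only [Finset.mem_coe, Finset.mem_filter, Finset.mem_range, not_le] at hx hy
          simp only at hxy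
          omega
      _ ≤ ∑ i ∈ Finset.range (N + c), g i := by
          apply Finset.sum_le_sum_of_subset_of_nonneg
          · intro i hi
            simp only [Finset.mem_image, Finset.mem_filter, Finset.mem_range, not_le] at hi ⊢
            omega
          · intro i _ _; exact hgnn i
      _ ≤ 1 + 1/(p-1) := base_sum hp hα hα1 (N + c)
  linarith

lemma gridsum_summable {p α a : ℝ} (hp : 1 < p) (hα : 0 < α) (hα1 : α ≤ 1) (ha : 0 ≤ a) :
    Summable (fun m : ℕ => α * (1 + |(m:ℝ)*α - a|) ^ (-p)) :=
  summable_of_sum_range_le (fun m => by positivity) (gridsum_le hp hα hα1 ha)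

lemma gridsum_tsum {p α a : ℝ} (hp : 1 < p) (hα : 0 < α) (hα1 : α ≤ 1) (ha : 0 ≤ a) :
    ∑' m : ℕ, α * (1 + |(m:ℝ)*α - a|) ^ (-p) ≤ 2 * (1 + 1/(p-1)) :=
  Summable.tsum_le_of_sum_range_le (gridsum_summable hp hα hα1 ha) (gridsum_le hp hα hα1 ha)

end GridSum




lemma nu_pos (k : ℕ) : 0 < nu k := by
  unfold nu; split <;> positivity

lemma abs_integral_cos_le {r u φ : ℝ} (hr : 0 < r) :
    |∫ x in (0:ℝ)..r, Real.cos (π * u * x / r + φ)| ≤ 2 * r / (1 + |u|) := by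
  have habs : |∫ x in (0:ℝ)..r, Real.cos (π * u * x / r + φ)| ≤ r := by
    have := intervalIntegral.norm_integral_le_of_norm_le_const
      (C := 1) (f := fun x => Real.cos (π * u * x / r + φ)) (a := 0) (b := r)
      (fun x _ => by rw [Real.norm_eq_abs]; exact Real.abs_cos_le_one _)
    rw [Real.norm_eq_abs] at this
    calc |∫ x in (0:ℝ)..r, Real.cos (π * u * x / r + φ)| ≤ 1 * |r - 0| := this
      _ = r := by rw [abs_of_nonneg (by linarith)]; ring
  rcases le_or_gt |u| 1 with h1 | h1
  · calc |∫ x in (0:ℝ)..r, Real.cos (π * u * x / r + φ)| ≤ r := habs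
      _ ≤ 2 * r / (1 + |u|) := by
          rw [le_div_iff₀ (by positivity)]
          nlinarith
  · have hu : u ≠ 0 := by intro h; rw [h, abs_zero] at h1; linarith
    have ha : π * u / r ≠ 0 := div_ne_zero (mul_ne_zero Real.pi_ne_zero hu) hr.ne'
    have heq : ∀ x : ℝ, π * u * x / r + φ = (π * u / r) * x + φ := by
      intro x; ring
    have : ∫ x in (0:ℝ)..r, Real.cos (π * u * x / r + φ)
        = (π * u / r)⁻¹ • ∫ x in ((π * u / r) * 0 + φ)..((π * u / r) * r + φ), Real.cos x := by
      rw [← intervalIntegral.integral_comp_mul_add Real.cos ha φ]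
      apply intervalIntegral.integral_congr
      intro x _
      show Real.cos (π * u * x / r + φ) = Real.cos ((π * u / r) * x + φ)
      congr 1
      ring
    rw [this, integral_cos]
    rw [smul_eq_mul, abs_mul, abs_inv]
    have hsin : |Real.sin (π * u / r * r + φ) - Real.sin (π * u / r * 0 + φ)| ≤ 2 := by
      have := Real.abs_sin_le_one (π * u / r * r + φ)
      have := Real.abs_sin_le_one (π * u / r * 0 + φ)
      set A := Real.sin (π * u / r * r + φ)
      set B := Real.sin (π * u / r * 0 + φ)
      calc |A - B| ≤ |A| + |B| := abs_sub _ _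
        _ ≤ 2 := by linarith
    have hpa : |π * u / r| = π * |u| / r := by
      rw [abs_div, abs_mul, abs_of_pos Real.pi_pos, abs_of_pos hr]
    calc |π * u / r|⁻¹ * |Real.sin (π * u / r * r + φ) - Real.sin (π * u / r * 0 + φ)|
        ≤ |π * u / r|⁻¹ * 2 := by
          apply mul_le_mul_of_nonneg_left hsin (by positivity)
      _ = 2 * r / (π * |u|) := by rw [hpa]; field_simp
      _ ≤ 2 * r / (1 + |u|) := by
          apply div_le_div_of_nonneg_left (by linarith) (by positivity)
          nlinarith [Real.pi_gt_three]

lemma abs_bcoef_le {L r : ℝ} (z : ℝ) (m k : ℕ) (hr : 1 ≤ r) (hrL : r ≤ L) :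
    |bcoef L r z m k| ≤ 4 * Real.sqrt (r/L) / (1 + |(m:ℝ)*(r/L) - (k:ℝ)|) := by
  have hr0 : (0:ℝ) < r := by linarith
  have hL : (0:ℝ) < L := by linarith
  set u₁ : ℝ := (m:ℝ)*(r/L) - (k:ℝ) with hu₁
  set u₂ : ℝ := (m:ℝ)*(r/L) + (k:ℝ) with hu₂
  set φ : ℝ := π*(m:ℝ)*z/L with hφ
  set P : ℝ := nu m * nu k * (Real.sqrt (2/L) * Real.sqrt (2/r)) with hP
  have hptwise : ∀ x : ℝ, nfun L m (x+z) * nfun r k x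
      = P * ((Real.cos (π*u₁*x/r+φ) + Real.cos (π*u₂*x/r+φ))/2) := by
    intro x
    have e1 : π * (m:ℝ) * (x+z) / L - π * (k:ℝ) * x / r = π*u₁*x/r+φ := by
      rw [hu₁, hφ]; field_simp; ring
    have e2 : π * (m:ℝ) * (x+z) / L + π * (k:ℝ) * x / r = π*u₂*x/r+φ := by
      rw [hu₂, hφ]; field_simp; ring
    have tri : Real.cos (π*(m:ℝ)*(x+z)/L) * Real.cos (π*(k:ℝ)*x/r)
        = (Real.cos (π*u₁*x/r+φ) + Real.cos (π*u₂*x/r+φ))/2 := by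
      rw [← e1, ← e2, Real.cos_sub, Real.cos_add]; ring
    show nu m * Real.sqrt (2/L) * Real.cos (π*(m:ℝ)*(x+z)/L) *
        (nu k * Real.sqrt (2/r) * Real.cos (π*(k:ℝ)*x/r)) = _
    calc nu m * Real.sqrt (2/L) * Real.cos (π*(m:ℝ)*(x+z)/L) *
          (nu k * Real.sqrt (2/r) * Real.cos (π*(k:ℝ)*x/r))
        = P * (Real.cos (π*(m:ℝ)*(x+z)/L) * Real.cos (π*(k:ℝ)*x/r)) := by rw [hP]; ring
      _ = P * ((Real.cos (π*u₁*x/r+φ) + Real.cos (π*u₂*x/r+φ))/2) := by rw [tri]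
  have hbc : bcoef L r z m k
      = P * ((∫ x in (0:ℝ)..r, Real.cos (π*u₁*x/r+φ))
           + (∫ x in (0:ℝ)..r, Real.cos (π*u₂*x/r+φ)))/2 := by
    unfold bcoef
    rw [MeasureTheory.integral_Icc_eq_integral_Ioc,
        ← intervalIntegral.integral_of_le hr0.le]
    rw [intervalIntegral.integral_congr (g :=
      fun x => P * ((Real.cos (π*u₁*x/r+φ) + Real.cos (π*u₂*x/r+φ))/2))
      (fun x _ => hptwise x)]
    rw [intervalIntegral.integral_const_mul]
    rw [intervalIntegral.integral_div]
    rw [intervalIntegral.integral_add ((by fun_prop : Continuous fun x:ℝ => Real.cos (π*u₁*x/r+φ)).intervalIntegrable 0 r) ((by fun_prop : Continuous fun x:ℝ => Real.cos (π*u₂*x/r+φ)).intervalIntegrable 0 r)]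
    ring
  have h1 : |∫ x in (0:ℝ)..r, Real.cos (π*u₁*x/r+φ)| ≤ 2*r/(1+|u₁|) :=
    abs_integral_cos_le hr0
  have h2 : |∫ x in (0:ℝ)..r, Real.cos (π*u₂*x/r+φ)| ≤ 2*r/(1+|u₂|) :=
    abs_integral_cos_le hr0
  have hu21 : |u₁| ≤ |u₂| := by
    have hm : (0:ℝ) ≤ (m:ℝ)*(r/L) := by positivity
    have hk : (0:ℝ) ≤ (k:ℝ) := Nat.cast_nonneg k
    have h2 : |u₂| = (m:ℝ)*(r/L) + (k:ℝ) := by rw [hu₂]; exact abs_of_nonneg (by linarith)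
    rw [h2, hu₁, abs_sub_le_iff]
    constructor <;> linarith
  have h2' : |∫ x in (0:ℝ)..r, Real.cos (π*u₂*x/r+φ)| ≤ 2*r/(1+|u₁|) := by
    refine h2.trans ?_
    apply div_le_div_of_nonneg_left (by linarith) (by positivity) (by linarith)
  have hS : (0:ℝ) < Real.sqrt (L*r) := Real.sqrt_pos.mpr (by positivity)
  have hPle : |P| ≤ 2 / Real.sqrt (L*r) := by
    have hsq : Real.sqrt (2/L) * Real.sqrt (2/r) = 2 / Real.sqrt (L*r) := by
      rw [← Real.sqrt_mul (by positivity : (0:ℝ) ≤ 2/L),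
        show (2/L) * (2/r) = 4 / (L*r) by field_simp; ring,
        Real.sqrt_div (by norm_num : (0:ℝ) ≤ 4),
        show (4:ℝ) = 2^2 by norm_num, Real.sqrt_sq (by norm_num : (0:ℝ) ≤ 2)]
    have hPpos : 0 < P := by
      rw [hP]
      have := nu_pos m; have := nu_pos k
      positivity
    rw [abs_of_pos hPpos, hP, hsq]
    calc nu m * nu k * (2 / Real.sqrt (L*r)) ≤ 1 * 1 * (2 / Real.sqrt (L*r)) := by
          apply mul_le_mul (mul_le_mul (nu_le_one m) (nu_le_one k) (nu_pos k).le (by linarith [nu_pos m])) (le_refl _) (by positivity) (by norm_num)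
      _ = 2 / Real.sqrt (L*r) := by ring
  have hD : (0:ℝ) < 1 + |u₁| := by positivity
  have hkey : Real.sqrt (r/L) * Real.sqrt (L*r) = r := by
    rw [← Real.sqrt_mul (by positivity : (0:ℝ) ≤ r/L),
      show (r/L) * (L*r) = r^2 by field_simp, Real.sqrt_sq hr0.le]
  set I₁ := ∫ x in (0:ℝ)..r, Real.cos (π*u₁*x/r+φ) with hI₁
  set I₂ := ∫ x in (0:ℝ)..r, Real.cos (π*u₂*x/r+φ) with hI₂
  rw [hbc]
  have step1 : |P * (I₁ + I₂)/2| ≤ (2 / Real.sqrt (L*r)) * (2*r/(1+|u₁|)) := by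
    rw [abs_div, abs_mul]
    have habs12 : |I₁ + I₂| ≤ 2 * (2*r/(1+|u₁|)) := by
      calc |I₁ + I₂| ≤ |I₁| + |I₂| := abs_add_le _ _
        _ ≤ 2 * (2*r/(1+|u₁|)) := by linarith
    calc |P| * |I₁ + I₂| / |(2:ℝ)| = |P| * |I₁ + I₂| / 2 := by norm_num
      _ ≤ (2 / Real.sqrt (L*r)) * (2 * (2*r/(1+|u₁|))) / 2 := by
          apply div_le_div_of_nonneg_right ?_ (by norm_num)
          apply mul_le_mul hPle habs12 (abs_nonneg _) (by positivity)
      _ = (2 / Real.sqrt (L*r)) * (2*r/(1+|u₁|)) := by ring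
  refine step1.trans ?_
  apply le_of_eq
  rw [div_mul_div_comm, eq_div_iff hD.ne']
  rw [div_mul_eq_mul_div, div_eq_iff (by positivity : (Real.sqrt (L*r) * (1+|u₁|)) ≠ 0)]
  nlinarith [hkey]




set_option maxHeartbeats 1000000

lemma nu_sq (k : ℕ) : k ≠ 0 → nu k ^ 2 = 1 := by
  intro h; unfold nu; rw [if_neg h]; norm_num

lemma nu_zero_sq : nu 0 ^ 2 = 1/2 := by
  unfold nu; rw [if_pos rfl, div_pow, one_pow, Real.sq_sqrt (by norm_num : (0:ℝ) ≤ 2)]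

lemma integral_cos_int {s : ℝ} (hs : 0 < s) (u : ℝ) (hu : ∃ n : ℤ, (n:ℝ) = u) (h : u ≠ 0) :
    ∫ x in (0:ℝ)..s, Real.cos (π*u*x/s) = 0 := by
  have ha : π * u / s ≠ 0 := div_ne_zero (mul_ne_zero Real.pi_ne_zero h) hs.ne'
  have heq : ∫ x in (0:ℝ)..s, Real.cos (π*u*x/s)
      = (π * u / s)⁻¹ • ∫ x in ((π*u/s) * 0 + 0)..((π*u/s) * s + 0), Real.cos x := by
    rw [← intervalIntegral.integral_comp_mul_add Real.cos ha 0]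
    apply intervalIntegral.integral_congr
    intro x _
    show Real.cos (π*u*x/s) = Real.cos ((π*u/s) * x + 0)
    congr 1
    ring
  rw [heq, integral_cos]
  obtain ⟨n, hn⟩ := hu
  have h1 : (π*u/s) * s + 0 = (n:ℝ) * π := by rw [← hn]; field_simp; ring
  have h2 : (π*u/s) * 0 + 0 = (0:ℝ) := by ring
  rw [h1, h2, Real.sin_int_mul_pi, Real.sin_zero]
  simp

lemma integral_cos_zero' {s : ℝ} : ∫ x in (0:ℝ)..s, Real.cos (π*(0:ℝ)*x/s) = s := by
  simp

lemma nfun_orthonormal {s : ℝ} (hs : 0 < s) (k l : ℕ) :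
    ∫ x in Set.Icc (0:ℝ) s, nfun s k x * nfun s l x = if k = l then 1 else 0 := by
  set Q : ℝ := nu k * nu l * (2/s) with hQ
  set u₁ : ℝ := (k:ℝ) - (l:ℝ) with hu₁
  set u₂ : ℝ := (k:ℝ) + (l:ℝ) with hu₂
  have hptwise : ∀ x : ℝ, nfun s k x * nfun s l x
      = Q * ((Real.cos (π*u₁*x/s) + Real.cos (π*u₂*x/s))/2) := by
    intro x
    have hsqrt : Real.sqrt (2/s) * Real.sqrt (2/s) = 2/s := by
      rw [← Real.sqrt_mul (by positivity)]
      rw [show (2/s)*(2/s) = (2/s)^2 by ring, Real.sqrt_sq (by positivity)]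
    have e1 : π * (k:ℝ) * x / s - π * (l:ℝ) * x / s = π*u₁*x/s := by
      rw [hu₁]; field_simp
    have e2 : π * (k:ℝ) * x / s + π * (l:ℝ) * x / s = π*u₂*x/s := by
      rw [hu₂]; field_simp
    have tri : Real.cos (π*(k:ℝ)*x/s) * Real.cos (π*(l:ℝ)*x/s)
        = (Real.cos (π*u₁*x/s) + Real.cos (π*u₂*x/s))/2 := by
      rw [← e1, ← e2, Real.cos_sub, Real.cos_add]; ring
    show nu k * Real.sqrt (2/s) * Real.cos (π*(k:ℝ)*x/s) *
        (nu l * Real.sqrt (2/s) * Real.cos (π*(l:ℝ)*x/s)) = _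
    calc nu k * Real.sqrt (2/s) * Real.cos (π*(k:ℝ)*x/s) *
          (nu l * Real.sqrt (2/s) * Real.cos (π*(l:ℝ)*x/s))
        = (nu k * nu l * (Real.sqrt (2/s) * Real.sqrt (2/s))) *
          (Real.cos (π*(k:ℝ)*x/s) * Real.cos (π*(l:ℝ)*x/s)) := by ring
      _ = Q * (Real.cos (π*(k:ℝ)*x/s) * Real.cos (π*(l:ℝ)*x/s)) := by rw [hsqrt, hQ]
      _ = _ := by rw [tri]
  have hint : ∫ x in Set.Icc (0:ℝ) s, nfun s k x * nfun s l x
      = Q * ((∫ x in (0:ℝ)..s, Real.cos (π*u₁*x/s))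
           + (∫ x in (0:ℝ)..s, Real.cos (π*u₂*x/s)))/2 := by
    rw [MeasureTheory.integral_Icc_eq_integral_Ioc, ← intervalIntegral.integral_of_le hs.le]
    rw [intervalIntegral.integral_congr (g :=
        fun x => Q * ((Real.cos (π*u₁*x/s) + Real.cos (π*u₂*x/s))/2))
        (fun x _ => hptwise x)]
    rw [intervalIntegral.integral_const_mul, intervalIntegral.integral_div,
      intervalIntegral.integral_add
        ((by fun_prop : Continuous fun x:ℝ => Real.cos (π*u₁*x/s)).intervalIntegrable 0 s)
        ((by fun_prop : Continuous fun x:ℝ => Real.cos (π*u₂*x/s)).intervalIntegrable 0 s)]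
    ring
  rw [hint]
  by_cases hkl : k = l
  · subst hkl
    rw [if_pos rfl]
    have h1 : u₁ = 0 := by rw [hu₁]; ring
    rw [h1, integral_cos_zero']
    by_cases hk : k = 0
    · subst hk
      have h2 : u₂ = 0 := by rw [hu₂]; norm_num
      rw [h2, integral_cos_zero', hQ]
      have := nu_zero_sq
      field_simp
      nlinarith [this]
    · have h2 : u₂ ≠ 0 := by
        rw [hu₂]
        have : (0:ℝ) < (k:ℝ) := by exact_mod_cast Nat.pos_of_ne_zero hk
        positivity
      rw [integral_cos_int hs u₂ ⟨(k:ℤ)+(k:ℤ), by push_cast; rw [hu₂]⟩ h2, hQ]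
      have := nu_sq k hk
      field_simp
      nlinarith [this]
  · rw [if_neg hkl]
    have h1 : u₁ ≠ 0 := by
      rw [hu₁]
      intro h
      apply hkl
      have : (k:ℝ) = (l:ℝ) := by linarith
      exact_mod_cast this
    have h2 : u₂ ≠ 0 := by
      rw [hu₂]
      rcases Nat.eq_zero_or_pos k with hk | hk
      · subst hk
        have hl : l ≠ 0 := fun h => hkl (h ▸ rfl)
        have : (0:ℝ) < (l:ℝ) := by exact_mod_cast Nat.pos_of_ne_zero hl
        positivity
      · have : (0:ℝ) < (k:ℝ) := by exact_mod_cast hk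
        positivity
    rw [integral_cos_int hs u₁ ⟨(k:ℤ)-(l:ℤ), by push_cast; rw [hu₁]⟩ h1,
      integral_cos_int hs u₂ ⟨(k:ℤ)+(l:ℤ), by push_cast; rw [hu₂]⟩ h2]
    ring

attribute [local instance] MeasureTheory.Measure.Subtype.measureSpace

lemma nfun_continuous (s : ℝ) (k : ℕ) : Continuous (nfun s k) := by
  unfold nfun; fun_prop


lemma shift_integral (g : ℝ → ℝ) (z r : ℝ) :
    ∫ x in Set.Icc z (z+r), g x = ∫ x in Set.Icc (0:ℝ) r, g (x+z) := by
  rw [MeasureTheory.integral_Icc_eq_integral_Ioc, MeasureTheory.integral_Icc_eq_integral_Ioc]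
  rcases le_or_gt 0 r with h | h
  · rw [← intervalIntegral.integral_of_le (by linarith : z ≤ z + r),
      ← intervalIntegral.integral_of_le h,
      intervalIntegral.integral_comp_add_right g z, zero_add, add_comm r z]
  · rw [Set.Ioc_eq_empty (by linarith), Set.Ioc_eq_empty (by linarith)]
    simp

theorem bcoef_parseval {L r : ℝ} (z : ℝ) (hr : 1 ≤ r) (hrL : r ≤ L)
    (hz0 : 0 ≤ z) (hzr : z + r ≤ L) (k l : ℕ) :
    Summable (fun m : ℕ => bcoef L r z m k * bcoef L r z m l) ∧
    ∑' m : ℕ, bcoef L r z m k * bcoef L r z m l = if k = l then 1 else 0 := by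
  have hr0 : (0:ℝ) < r := by linarith
  have hL : (0:ℝ) < L := by linarith
  set X := Set.Icc (0:ℝ) L with hX
  haveI : IsFiniteMeasure (volume : Measure X) := by
    constructor
    rw [MeasureTheory.Measure.Subtype.volume_univ nullMeasurableSet_Icc]
    exact lt_of_le_of_lt (le_of_eq (Real.volume_Icc)) ENNReal.ofReal_lt_top
  haveI : Fact ((1:ENNReal) ≤ 2) := ⟨by norm_num⟩
  set T : C(X, ℝ) →L[ℝ] Lp ℝ 2 (volume : Measure X) := ContinuousMap.toLp 2 volume ℝ with hT
  -- inner product of toLp images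
  have hinner : ∀ f g : C(X, ℝ), inner ℝ (T f) (T g) = ∫ x : X, f x * g x := by
    intro f g
    rw [MeasureTheory.L2.inner_def]
    apply integral_congr_ae
    filter_upwards [ContinuousMap.coeFn_toLp (p := 2) (μ := (volume : Measure X)) (𝕜 := ℝ) f,
      ContinuousMap.coeFn_toLp (p := 2) (μ := (volume : Measure X)) (𝕜 := ℝ) g] with x hf hg
    rw [hf, hg]
    simp [RCLike.inner_apply, starRingEnd_apply, mul_comm]
  -- the cosine family
  set ccos : ℕ → C(X, ℝ) := fun j => ⟨fun x => Real.cos (π * (j:ℝ) * (x:ℝ) / L), by fun_prop⟩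
    with hccos
  set N : ℕ → Lp ℝ 2 (volume : Measure X) := fun j => T ⟨fun x => nfun L j (x:ℝ), by
    exact (nfun_continuous L j).comp continuous_subtype_val⟩ with hN
  -- orthonormality of N
  have hNcoe : ∀ (i : ℕ) (x : X), (⟨fun x : X => nfun L i (x:ℝ), by
      exact (nfun_continuous L i).comp continuous_subtype_val⟩ : C(X, ℝ)) x = nfun L i (x:ℝ) :=
    fun i x => rfl
  have hNortho : Orthonormal ℝ N := by
    rw [orthonormal_iff_ite]
    intro i j
    rw [hN]
    rw [hinner]
    have hsub := integral_subtype (s := Set.Icc (0:ℝ) L) measurableSet_Icc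
      (fun y => nfun L i y * nfun L j y)
    calc (∫ x : X, nfun L i (x:ℝ) * nfun L j (x:ℝ)) = ∫ y in Set.Icc (0:ℝ) L, nfun L i y * nfun L j y := hsub
      _ = if i = j then 1 else 0 := nfun_orthonormal hL i j
  -- span of ccos is closed under multiplication
  have hkey : ∀ i j : ℕ, ∀ d : ℕ, ((d:ℝ) = (i:ℝ) - (j:ℝ) ∨ (d:ℝ) = (j:ℝ) - (i:ℝ)) →
      ccos i * ccos j = (2⁻¹ : ℝ) • ccos (i+j) + (2⁻¹ : ℝ) • ccos d := by
    intro i j d hd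
    ext x
    simp only [ContinuousMap.mul_apply, ContinuousMap.add_apply, ContinuousMap.smul_apply,
      hccos, ContinuousMap.coe_mk, smul_eq_mul]
    have hsum : Real.cos (π*((i+j:ℕ):ℝ)*(x:ℝ)/L)
        = Real.cos (π*(i:ℝ)*(x:ℝ)/L + π*(j:ℝ)*(x:ℝ)/L) := by
      congr 1; push_cast; ring
    have hdiff : Real.cos (π*(d:ℝ)*(x:ℝ)/L)
        = Real.cos (π*(i:ℝ)*(x:ℝ)/L - π*(j:ℝ)*(x:ℝ)/L) := by
      rcases hd with h | h
      · rw [h]; congr 1; ring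
      · rw [h, show π*((j:ℝ)-(i:ℝ))*(x:ℝ)/L = -(π*(i:ℝ)*(x:ℝ)/L - π*(j:ℝ)*(x:ℝ)/L) by ring,
          Real.cos_neg]
    rw [hsum, hdiff, Real.cos_add, Real.cos_sub]
    ring
  have hmulmem : ∀ i j : ℕ, (ccos i * ccos j : C(X,ℝ)) ∈ Submodule.span ℝ (Set.range ccos) := by
    intro i j
    have hmem : ∀ n : ℕ, ccos n ∈ Submodule.span ℝ (Set.range ccos) :=
      fun n => Submodule.subset_span ⟨n, rfl⟩
    rcases le_total j i with hij | hij
    · rw [hkey i j (i - j) (Or.inl (by push_cast [Nat.cast_sub hij]; ring))]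
      exact Submodule.add_mem _ (Submodule.smul_mem _ _ (hmem _)) (Submodule.smul_mem _ _ (hmem _))
    · rw [hkey i j (j - i) (Or.inr (by push_cast [Nat.cast_sub hij]; ring))]
      exact Submodule.add_mem _ (Submodule.smul_mem _ _ (hmem _)) (Submodule.smul_mem _ _ (hmem _))
  have honemem : (1 : C(X,ℝ)) ∈ Submodule.span ℝ (Set.range ccos) := by
    have : ccos 0 = 1 := by
      ext x
      simp [hccos]
    rw [← this]
    exact Submodule.subset_span ⟨0, rfl⟩
  set A : Subalgebra ℝ C(X,ℝ) := Submodule.toSubalgebra (Submodule.span ℝ (Set.range ccos))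
    honemem (by
      intro x y hx hy
      have h1 : x * y ∈ Submodule.span ℝ (Set.range ccos) * Submodule.span ℝ (Set.range ccos) :=
        Submodule.mul_mem_mul hx hy
      rw [Submodule.span_mul_span] at h1
      refine Submodule.span_le.mpr ?_ h1
      rintro f ⟨a, ha, b, hb, rfl⟩
      obtain ⟨i, rfl⟩ := ha
      obtain ⟨j, rfl⟩ := hb
      exact hmulmem i j) with hA
  have hsep : A.SeparatesPoints := by
    intro x y hxy
    refine ⟨_, ⟨ccos 1, Submodule.subset_span ⟨1, rfl⟩, rfl⟩, ?_⟩
    simp only [hccos, ContinuousMap.coe_mk]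
    intro hc
    push_cast at hc
    apply hxy
    have hx := x.2
    have hy := y.2
    simp only [hX, Set.mem_Icc] at hx hy
    have h1 : π * (1:ℝ) * (x:ℝ) / L ∈ Set.Icc 0 π := by
      constructor
      · have := hx.1; positivity
      · rw [div_le_iff₀ hL]
        have := hx.2
        nlinarith [Real.pi_pos]
    have h2 : π * (1:ℝ) * (y:ℝ) / L ∈ Set.Icc 0 π := by
      constructor
      · have := hy.1; positivity
      · rw [div_le_iff₀ hL]
        have := hy.2
        nlinarith [Real.pi_pos]
    have := Real.injOn_cos h1 h2 hc
    have hxyv : (x:ℝ) = (y:ℝ) := by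
      field_simp at this
      linarith
    exact Subtype.ext hxyv
  have hAtop : A.topologicalClosure = ⊤ :=
    ContinuousMap.subalgebra_topologicalClosure_eq_top_of_separatesPoints A hsep
  -- transfer density to Lp
  have hdense : ⊤ ≤ (Submodule.span ℝ (Set.range N)).topologicalClosure := by
    have hTrange : Set.range (T : C(X,ℝ) → Lp ℝ 2 (volume : Measure X)) ⊆
        closure (Submodule.span ℝ (Set.range N) : Set (Lp ℝ 2 (volume : Measure X))) := by
      rintro _ ⟨g, rfl⟩
      have hg : g ∈ closure (A : Set C(X,ℝ)) := by
        have : g ∈ (A.topologicalClosure : Set C(X,ℝ)) := by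
          rw [hAtop]; trivial
        exact this
      have hAspan : (A : Set C(X,ℝ)) = (Submodule.span ℝ (Set.range ccos) : Set C(X,ℝ)) := rfl
      rw [hAspan] at hg
      have h1 : T g ∈ T '' closure (Submodule.span ℝ (Set.range ccos) : Set C(X,ℝ)) :=
        ⟨g, hg, rfl⟩
      have h2 : T '' closure (Submodule.span ℝ (Set.range ccos) : Set C(X,ℝ)) ⊆
          closure (T '' (Submodule.span ℝ (Set.range ccos) : Set C(X,ℝ))) :=
        image_closure_subset_closure_image T.continuous
      refine closure_mono ?_ (h2 h1)
      -- T '' span ccos ⊆ span N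
      intro u hu
      obtain ⟨c, hc, rfl⟩ := hu
      have : T c ∈ Submodule.map (T : C(X,ℝ) →ₗ[ℝ] _) (Submodule.span ℝ (Set.range ccos)) :=
        ⟨c, hc, rfl⟩
      rw [Submodule.map_span] at this
      refine Submodule.span_le.mpr ?_ this
      rintro _ ⟨_, ⟨j, rfl⟩, rfl⟩
      -- T (ccos j) ∈ span N
      have hcj : nu j * Real.sqrt (2/L) ≠ 0 := by
        have := nu_pos j
        positivity
      have hNj : N j = (nu j * Real.sqrt (2/L)) • T (ccos j) := by
        have hfun : (⟨fun x : X => nfun L j (x:ℝ), by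
            exact (nfun_continuous L j).comp continuous_subtype_val⟩ : C(X,ℝ))
            = (nu j * Real.sqrt (2/L)) • ccos j := by
          ext x
          simp only [ContinuousMap.smul_apply, hccos, ContinuousMap.coe_mk, smul_eq_mul]
          unfold nfun
          ring
        rw [hN]
        show T ⟨fun x : X => nfun L j (x:ℝ), _⟩ = _
        rw [hfun, T.map_smul]
      have : (T : C(X,ℝ) →ₗ[ℝ] _) (ccos j) = (nu j * Real.sqrt (2/L))⁻¹ • N j := by
        rw [hNj, smul_smul, inv_mul_cancel₀ hcj, one_smul]
        rfl
      rw [this]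
      exact Submodule.smul_mem _ _ (Submodule.subset_span ⟨j, rfl⟩)
    intro f _
    have hDR : DenseRange (T : C(X,ℝ) → Lp ℝ 2 (volume : Measure X)) :=
      ContinuousMap.toLp_denseRange ℝ volume ℝ (by norm_num)
    have : closure (Set.range (T : C(X,ℝ) → Lp ℝ 2 (volume : Measure X))) ⊆
        closure (Submodule.span ℝ (Set.range N) : Set (Lp ℝ 2 (volume : Measure X))) := by
      rw [← closure_closure (s := (Submodule.span ℝ (Set.range N) : Set (Lp ℝ 2 (volume : Measure X))))]
      exact closure_mono hTrange
    have hf : f ∈ closure (Submodule.span ℝ (Set.range N) : Set (Lp ℝ 2 (volume : Measure X))) :=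
      this (hDR f)
    exact hf
  -- the Hilbert basis
  set B : HilbertBasis ℕ ℝ (Lp ℝ 2 (volume : Measure X)) := HilbertBasis.mk hNortho hdense with hB
  have hBcoe : ⇑B = N := by
    rw [hB]; exact HilbertBasis.coe_mk hNortho hdense
  -- the shifted functions
  set G : ℕ → ℝ → ℝ := fun j => (Set.Icc z (z+r)).indicator (fun t => nfun r j (t - z)) with hG
  have hGmeas : ∀ j, Measurable (G j) := by
    intro j
    exact (((nfun_continuous r j).comp (continuous_sub_right z)).measurable).indicator
      measurableSet_Icc
  have hGbdd : ∀ j x, |G j x| ≤ 2 := by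
    intro j x
    have hb : ∀ y : ℝ, |nfun r j (y - z)| ≤ 2 := by
      intro y
      unfold nfun
      rw [abs_mul, abs_mul]
      have h1 : |nu j| ≤ 1 := by
        rw [abs_of_pos (nu_pos j)]
        unfold nu
        split
        · rw [div_le_one (by positivity)]
          nlinarith [Real.sq_sqrt (by norm_num : (0:ℝ) ≤ 2), Real.sqrt_nonneg 2]
        · exact le_refl 1
      have h2 : |Real.sqrt (2/r)| ≤ Real.sqrt 2 := by
        rw [abs_of_nonneg (Real.sqrt_nonneg _)]
        apply Real.sqrt_le_sqrt
        rw [div_le_iff₀ hr0]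
        nlinarith
      have h3 : |Real.cos (π*(j:ℝ)*(y-z)/r)| ≤ 1 := Real.abs_cos_le_one _
      have hs2 : Real.sqrt 2 ≤ 2 := by
        nlinarith [Real.sq_sqrt (by norm_num : (0:ℝ) ≤ 2), Real.sqrt_nonneg 2]
      calc |nu j| * |Real.sqrt (2/r)| * |Real.cos (π*(j:ℝ)*(y-z)/r)|
          ≤ 1 * Real.sqrt 2 * 1 := by
            apply mul_le_mul (mul_le_mul h1 h2 (abs_nonneg _) (by norm_num)) h3
              (abs_nonneg _) (by positivity)
        _ ≤ 2 := by linarith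
    simp only [hG]
    by_cases hx : x ∈ Set.Icc z (z+r)
    · rw [Set.indicator_of_mem hx]
      exact hb x
    · rw [Set.indicator_of_notMem hx]
      norm_num
  have hGmem : ∀ j, MemLp (fun x : X => G j (x:ℝ)) 2 (volume : Measure X) := by
    intro j
    apply MemLp.of_bound (((hGmeas j).comp measurable_subtype_coe).aestronglyMeasurable) 2
    apply ae_of_all
    intro x
    rw [Real.norm_eq_abs]
    exact hGbdd j (x:ℝ)
  set F : ℕ → Lp ℝ 2 (volume : Measure X) := fun j => (hGmem j).toLp _ with hF
  -- generic inner product computation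
  have hinner3 : ∀ (u v : Lp ℝ 2 (volume : Measure X)) (fu fv : X → ℝ),
      (⇑u =ᵐ[(volume : Measure X)] fu) → (⇑v =ᵐ[(volume : Measure X)] fv) →
      inner ℝ u v = ∫ x : X, fu x * fv x := by
    intro u v fu fv hu hv
    rw [MeasureTheory.L2.inner_def]
    apply integral_congr_ae
    filter_upwards [hu, hv] with x h1 h2
    rw [h1, h2]
    simp [RCLike.inner_apply, starRingEnd_apply, mul_comm]
  -- inner products with basis elements
  have hindmul : ∀ (j m : ℕ) (y : ℝ), nfun L m y * G j y
      = (Set.Icc z (z+r)).indicator (fun t => nfun L m t * nfun r j (t - z)) y := by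
    intro j m y
    simp only [hG]
    by_cases hy : y ∈ Set.Icc z (z+r)
    · rw [Set.indicator_of_mem hy, Set.indicator_of_mem hy]
    · rw [Set.indicator_of_notMem hy, Set.indicator_of_notMem hy, mul_zero]
  have hIccsub : Set.Icc z (z+r) ⊆ Set.Icc (0:ℝ) L :=
    Set.Icc_subset_Icc (by linarith) (by linarith)
  have hNF : ∀ m j, inner ℝ (N m) (F j) = bcoef L r z m j := by
    intro m j
    rw [hN, hF]
    rw [hinner3 _ _ (fun x : X => nfun L m (x:ℝ)) (fun x : X => G j (x:ℝ))
      (ContinuousMap.coeFn_toLp (p := 2) (μ := (volume : Measure X)) (𝕜 := ℝ) _)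
      (MemLp.coeFn_toLp (hGmem j))]
    rw [integral_subtype measurableSet_Icc (fun y => nfun L m y * G j y)]
    rw [MeasureTheory.integral_congr_ae (ae_of_all _
      (fun y => hindmul j m y) : (fun y => nfun L m y * G j y) =ᵐ[_] _)]
    rw [MeasureTheory.setIntegral_indicator measurableSet_Icc]
    rw [Set.inter_eq_self_of_subset_right hIccsub]
    rw [shift_integral]
    unfold bcoef
    apply integral_congr_ae
    apply ae_of_all
    intro x
    simp
  have hFN : ∀ m j, inner ℝ (F j) (N m) = bcoef L r z m j := by
    intro m j
    rw [real_inner_comm]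
    exact hNF m j
  have hFF : inner ℝ (F k) (F l) = if k = l then 1 else 0 := by
    rw [hF]
    rw [hinner3 _ _ (fun x : X => G k (x:ℝ)) (fun x : X => G l (x:ℝ))
      (MemLp.coeFn_toLp (hGmem k)) (MemLp.coeFn_toLp (hGmem l))]
    rw [integral_subtype measurableSet_Icc (fun y => G k y * G l y)]
    have hind2 : ∀ y : ℝ, G k y * G l y
        = (Set.Icc z (z+r)).indicator (fun t => nfun r k (t - z) * nfun r l (t - z)) y := by
      intro y
      simp only [hG]
      by_cases hy : y ∈ Set.Icc z (z+r)
      · rw [Set.indicator_of_mem hy, Set.indicator_of_mem hy, Set.indicator_of_mem hy]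
      · rw [Set.indicator_of_notMem hy, Set.indicator_of_notMem hy,
          Set.indicator_of_notMem hy, mul_zero]
    rw [MeasureTheory.integral_congr_ae (ae_of_all _ hind2 :
      (fun y => G k y * G l y) =ᵐ[_] _)]
    rw [MeasureTheory.setIntegral_indicator measurableSet_Icc]
    rw [Set.inter_eq_self_of_subset_right hIccsub]
    rw [shift_integral]
    have heq2 : ∫ x in Set.Icc (0:ℝ) r, nfun r k (x + z - z) * nfun r l (x + z - z)
        = ∫ x in Set.Icc (0:ℝ) r, nfun r k x * nfun r l x := by
      apply integral_congr_ae
      apply ae_of_all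
      intro x
      simp
    rw [heq2]
    exact nfun_orthonormal hr0 k l
  -- conclude via Parseval
  have hsum := B.summable_inner_mul_inner (F k) (F l)
  rw [hBcoe] at hsum
  have htsum := B.tsum_inner_mul_inner (F k) (F l)
  rw [hBcoe] at htsum
  have hfun : (fun m : ℕ => inner ℝ (F k) (N m) * inner ℝ (N m) (F l))
      = fun m : ℕ => bcoef L r z m k * bcoef L r z m l := by
    funext m
    rw [hFN m k, hNF m l]
  rw [hfun] at hsum htsum
  rw [hFF] at htsum
  exact ⟨hsum, htsum⟩

lemma prod_bound {δ u v w : ℝ} (hδ0 : 0 < δ) (hδ1 : δ < 1)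
    (h1u : 1 ≤ u) (h1v : 1 ≤ v) (hw1 : 1 ≤ w) (hwu : w ≤ u) :
    u⁻¹ * v⁻¹ ≤ w^(δ-1) * (u^(-(1+δ)) + v^(-(1+δ))) := by
  have hu0 : (0:ℝ) < u := by linarith
  have hv0 : (0:ℝ) < v := by linarith
  have hw0 : (0:ℝ) < w := by linarith
  have hud : u^(δ-1) ≤ w^(δ-1) := Real.rpow_le_rpow_of_nonpos hw0 hwu (by linarith)
  rcases le_total u v with huv | hvu
  · -- u ≤ v : bound by w^(δ-1) u^(-(1+δ))
    have key : u⁻¹ * v⁻¹ ≤ w^(δ-1) * u^(-(1+δ)) := by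
      have e1 : u⁻¹ = u^(δ-1) * u^(-δ) := by
        rw [← Real.rpow_add hu0, show δ-1 + -δ = (-1:ℝ) by ring, Real.rpow_neg_one]
      have e2 : u^(-(1+δ)) = u^(-δ) * u^(-(1:ℝ)) := by
        rw [← Real.rpow_add hu0]
        norm_num
      rw [e1, e2]
      have hv1 : v⁻¹ ≤ u⁻¹ := by
        apply inv_anti₀ hu0 huv
      calc u^(δ-1) * u^(-δ) * v⁻¹ ≤ w^(δ-1) * u^(-δ) * u⁻¹ := by
            apply mul_le_mul (mul_le_mul hud (le_refl _) (by positivity) (by positivity)) hv1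
              (by positivity) (by positivity)
        _ = w^(δ-1) * (u^(-δ) * u^(-(1:ℝ))) := by rw [Real.rpow_neg_one]; ring
    refine key.trans ?_
    have : (0:ℝ) ≤ w^(δ-1) * v^(-(1+δ)) := by positivity
    nlinarith [this]
  · -- v ≤ u : bound by w^(δ-1) v^(-(1+δ))
    have key : u⁻¹ * v⁻¹ ≤ w^(δ-1) * v^(-(1+δ)) := by
      have e2 : v^(-(1+δ)) = v^(-δ) * v^(-(1:ℝ)) := by
        rw [← Real.rpow_add hv0]
        norm_num
      have h3 : u⁻¹ ≤ w^(δ-1) * v^(-δ) := by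
        have e1 : u⁻¹ = u^(δ-1) * u^(-δ) := by
          rw [← Real.rpow_add hu0, show δ-1 + -δ = (-1:ℝ) by ring, Real.rpow_neg_one]
        rw [e1]
        have h4 : u^(-δ) ≤ v^(-δ) := Real.rpow_le_rpow_of_nonpos hv0 hvu (by linarith)
        apply mul_le_mul hud h4 (by positivity) (by positivity)
      calc u⁻¹ * v⁻¹ ≤ (w^(δ-1) * v^(-δ)) * v⁻¹ := by
            apply mul_le_mul_of_nonneg_right h3 (by positivity)
        _ = w^(δ-1) * (v^(-δ) * v^(-(1:ℝ))) := by rw [Real.rpow_neg_one]; ring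
        _ = w^(δ-1) * v^(-(1+δ)) := by rw [← e2]
    refine key.trans ?_
    have : (0:ℝ) ≤ w^(δ-1) * u^(-(1+δ)) := by positivity
    nlinarith [this]

/-- Tail and head bounds for `∑_m b_{m,k}^z b_{m,l}^z`: for every `δ ∈ (0,1)` there is
`C > 0` such that for all `L ≥ r ≥ 1`, `z ∈ [0, L − r]`, `M ∈ [0,∞)` and `k, l ∈ ℕ₀`:
(i) if `k ≠ l`, or `k = l` and `k ≤ rM/L`, then
`|∑_{m ≥ M} b_{m,k}^z b_{m,l}^z| ≤ C [(1+|k−rM/L|)^{δ−1} + (1+|l−rM/L|)^{δ−1}]`, and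
(ii) if `k ≠ l`, or `k = l` and `k ≥ rM/L`, then the same bound holds for
`|∑_{m < M} b_{m,k}^z b_{m,l}^z|`. -/
theorem bcoef_partial_sum_bounds (δ : ℝ) (hδ : δ ∈ Set.Ioo (0 : ℝ) 1) :
    ∃ C : ℝ, 0 < C ∧ ∀ (L r z M : ℝ) (k l : ℕ),
      1 ≤ r → r ≤ L → z ∈ Set.Icc 0 (L - r) → 0 ≤ M →
      ((k ≠ l ∨ (k : ℝ) ≤ r * M / L) →
        |∑' m : ℕ, if M ≤ (m : ℝ) then bcoef L r z m k * bcoef L r z m l else 0| ≤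
          C * ((1 + |(k : ℝ) - r * M / L|) ^ (δ - 1) +
               (1 + |(l : ℝ) - r * M / L|) ^ (δ - 1))) ∧
      ((k ≠ l ∨ r * M / L ≤ (k : ℝ)) →
        |∑' m : ℕ, if (m : ℝ) < M then bcoef L r z m k * bcoef L r z m l else 0| ≤
          C * ((1 + |(k : ℝ) - r * M / L|) ^ (δ - 1) +
               (1 + |(l : ℝ) - r * M / L|) ^ (δ - 1))) := by
  obtain ⟨hδ0, hδ1⟩ := hδ
  have hp : 1 < 1 + δ := by linarith
  set K : ℝ := 2 * (1 + 1/(1+δ-1)) with hK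
  have hKpos : 0 < K := by
    rw [hK]
    have : (0:ℝ) < 1 + δ - 1 := by linarith
    positivity
  refine ⟨32 * K, by positivity, ?_⟩
  intro L r z M k l hr hrL hz hM
  have hr0 : (0:ℝ) < r := by linarith
  have hL : (0:ℝ) < L := by linarith
  set α : ℝ := r / L with hα
  have hα0 : 0 < α := by positivity
  have hα1 : α ≤ 1 := by rw [hα, div_le_one hL]; linarith
  set μ : ℝ := r * M / L with hμ
  have hμα : μ = M * α := by rw [hμ, hα]; ring
  have hμ0 : 0 ≤ μ := by rw [hμ]; positivity
  obtain ⟨hsumf, htsumf⟩ := bcoef_parseval z hr hrL hz.1 (by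
    have := hz.2
    linarith : z + r ≤ L) k l
  classical
  -- the master estimate for a masked sum
  have main_est : ∀ (S : Set ℕ) (a b : ℕ),
      (∀ m : ℕ, m ∈ S → 1 + |(a:ℝ) - μ| ≤ 1 + |(m:ℝ)*α - (a:ℝ)|) →
      Summable (fun m => if m ∈ S then bcoef L r z m a * bcoef L r z m b else 0) →
      |∑' m : ℕ, if m ∈ S then bcoef L r z m a * bcoef L r z m b else 0| ≤
        32 * K * (1 + |(a:ℝ) - μ|)^(δ-1) := by
    intro S a b hside hsum
    set w : ℝ := 1 + |(a:ℝ) - μ| with hw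
    have hw1 : (1:ℝ) ≤ w := by rw [hw]; linarith [abs_nonneg ((a:ℝ) - μ)]
    set h : ℕ → ℝ := fun m => 16 * w^(δ-1) *
      (α * (1 + |(m:ℝ)*α - (a:ℝ)|)^(-(1+δ)) + α * (1 + |(m:ℝ)*α - (b:ℝ)|)^(-(1+δ))) with hh
    have hsa := gridsum_summable (a := (a:ℝ)) hp hα0 hα1 (Nat.cast_nonneg a)
    have hsb := gridsum_summable (a := (b:ℝ)) hp hα0 hα1 (Nat.cast_nonneg b)
    have hsummh : Summable h := by
      rw [hh]
      exact ((hsa.add hsb).mul_left _)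
    have hptle : ∀ m : ℕ, |if m ∈ S then bcoef L r z m a * bcoef L r z m b else 0| ≤ h m := by
      intro m
      have hhm0 : 0 ≤ h m := by
        rw [hh]
        positivity
      by_cases hm : m ∈ S
      · rw [if_pos hm]
        set u : ℝ := 1 + |(m:ℝ)*α - (a:ℝ)| with hu
        set v : ℝ := 1 + |(m:ℝ)*α - (b:ℝ)| with hv
        have h1u : (1:ℝ) ≤ u := by rw [hu]; linarith [abs_nonneg ((m:ℝ)*α - (a:ℝ))]
        have h1v : (1:ℝ) ≤ v := by rw [hv]; linarith [abs_nonneg ((m:ℝ)*α - (b:ℝ))]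
        have hba : |bcoef L r z m a| ≤ 4 * Real.sqrt α / u := abs_bcoef_le z m a hr hrL
        have hbb : |bcoef L r z m b| ≤ 4 * Real.sqrt α / v := abs_bcoef_le z m b hr hrL
        have hsq : Real.sqrt α * Real.sqrt α = α := Real.mul_self_sqrt hα0.le
        have habs : |bcoef L r z m a * bcoef L r z m b| ≤ 16 * α * (u⁻¹ * v⁻¹) := by
          rw [abs_mul]
          calc |bcoef L r z m a| * |bcoef L r z m b|
              ≤ (4 * Real.sqrt α / u) * (4 * Real.sqrt α / v) := by
                apply mul_le_mul hba hbb (abs_nonneg _) (by positivity)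
            _ = 16 * α * (u⁻¹ * v⁻¹) := by
                field_simp
                nlinarith [hsq]
        refine habs.trans ?_
        have hpb := prod_bound hδ0 hδ1 h1u h1v hw1 (hside m hm)
        calc 16 * α * (u⁻¹ * v⁻¹) ≤ 16 * α * (w^(δ-1) * (u^(-(1+δ)) + v^(-(1+δ)))) := by
              apply mul_le_mul_of_nonneg_left hpb (by positivity)
          _ = h m := by rw [hh]; ring
      · rw [if_neg hm]
        simpa using hhm0
    have hsabs : Summable (fun m => |if m ∈ S then bcoef L r z m a * bcoef L r z m b else 0|) :=
      Summable.of_nonneg_of_le (fun m => abs_nonneg _) hptle hsummh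
    calc |∑' m : ℕ, if m ∈ S then bcoef L r z m a * bcoef L r z m b else 0|
        ≤ ∑' m : ℕ, |if m ∈ S then bcoef L r z m a * bcoef L r z m b else 0| := by
          have := norm_tsum_le_tsum_norm (f := fun m : ℕ =>
            if m ∈ S then bcoef L r z m a * bcoef L r z m b else 0) (by
              simpa [Real.norm_eq_abs] using hsabs)
          simpa [Real.norm_eq_abs] using this
      _ ≤ ∑' m : ℕ, h m := hsabs.tsum_le_tsum hptle hsummh
      _ = 16 * w^(δ-1) * ((∑' m : ℕ, α * (1 + |(m:ℝ)*α - (a:ℝ)|)^(-(1+δ)))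
            + ∑' m : ℕ, α * (1 + |(m:ℝ)*α - (b:ℝ)|)^(-(1+δ))) := by
          rw [hh, tsum_mul_left, hsa.tsum_add hsb]
      _ ≤ 16 * w^(δ-1) * (K + K) := by
          apply mul_le_mul_of_nonneg_left ?_ (by positivity)
          have h1 := gridsum_tsum (a := (a:ℝ)) hp hα0 hα1 (Nat.cast_nonneg a)
          have h2 := gridsum_tsum (a := (b:ℝ)) hp hα0 hα1 (Nat.cast_nonneg b)
          rw [hK]
          exact add_le_add h1 h2
      _ = 32 * K * w^(δ-1) := by ring
  -- masked summability
  have hmask : ∀ (S : ℕ → Prop) [DecidablePred S],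
      Summable (fun m => if S m then bcoef L r z m k * bcoef L r z m l else 0) := by
    intro S inst
    refine (hsumf.indicator {m | S m}).congr fun m => ?_
    by_cases hS : S m <;> simp [Set.indicator_apply, Set.mem_setOf_eq, hS]
  have hmaskswap : ∀ (S : ℕ → Prop) [DecidablePred S],
      Summable (fun m => if S m then bcoef L r z m l * bcoef L r z m k else 0) := by
    intro S inst
    refine (hmask S).congr fun m => ?_
    by_cases hS : S m <;> simp [hS, mul_comm]
  -- splitting the full sum
  have htot : (∑' m : ℕ, bcoef L r z m k * bcoef L r z m l)
      = (∑' m : ℕ, if M ≤ (m:ℝ) then bcoef L r z m k * bcoef L r z m l else 0)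
      + (∑' m : ℕ, if (m:ℝ) < M then bcoef L r z m k * bcoef L r z m l else 0) := by
    rw [← (hmask (fun m => M ≤ (m:ℝ))).tsum_add (hmask (fun m => (m:ℝ) < M))]
    apply tsum_congr
    intro m
    rcases le_or_gt M (m:ℝ) with h | h
    · rw [if_pos h, if_neg (not_lt.mpr h), add_zero]
    · rw [if_neg (not_le.mpr h), if_pos h, zero_add]
  -- final comparison helper
  have hfinish : ∀ a b : ℕ, 32 * K * (1 + |(a:ℝ) - μ|)^(δ-1)
      ≤ 32 * K * ((1 + |(a:ℝ) - μ|)^(δ-1) + (1 + |(b:ℝ) - μ|)^(δ-1)) := by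
    intro a b
    have h0 : (0:ℝ) ≤ (1 + |(b:ℝ) - μ|)^(δ-1) := by positivity
    nlinarith [hKpos]
  -- side conditions
  have hside_tail : ∀ (a : ℕ), (a:ℝ) ≤ μ → ∀ m : ℕ, (M ≤ (m:ℝ)) →
      1 + |(a:ℝ) - μ| ≤ 1 + |(m:ℝ)*α - (a:ℝ)| := by
    intro a ha m hm
    have h1 : μ ≤ (m:ℝ)*α := by
      rw [hμα]
      exact mul_le_mul_of_nonneg_right hm hα0.le
    have h2 : |(a:ℝ) - μ| = μ - (a:ℝ) := by
      rw [abs_of_nonpos (by linarith)]; ring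
    have h3 : μ - (a:ℝ) ≤ |(m:ℝ)*α - (a:ℝ)| := le_abs.mpr (Or.inl (by linarith))
    linarith
  have hside_head : ∀ (a : ℕ), μ ≤ (a:ℝ) → ∀ m : ℕ, ((m:ℝ) < M) →
      1 + |(a:ℝ) - μ| ≤ 1 + |(m:ℝ)*α - (a:ℝ)| := by
    intro a ha m hm
    have h1 : (m:ℝ)*α ≤ μ := by
      rw [hμα]
      exact mul_le_mul_of_nonneg_right hm.le hα0.le
    have h2 : |(a:ℝ) - μ| = (a:ℝ) - μ := abs_of_nonneg (by linarith)
    have h3 : (a:ℝ) - μ ≤ |(m:ℝ)*α - (a:ℝ)| := le_abs.mpr (Or.inr (by linarith))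
    linarith
  have hswap_tsum : ∀ (S : ℕ → Prop) [DecidablePred S],
      (∑' m : ℕ, if S m then bcoef L r z m k * bcoef L r z m l else 0)
      = ∑' m : ℕ, if S m then bcoef L r z m l * bcoef L r z m k else 0 := by
    intro S inst
    apply tsum_congr
    intro m
    by_cases hS : S m <;> simp [hS, mul_comm]
  constructor
  · -- tail bound
    intro hcase
    by_cases hk : (k:ℝ) ≤ μ
    · exact (main_est (fun m => M ≤ (m:ℝ)) k l (hside_tail k hk) (hmask _)).trans (hfinish k l)
    · by_cases hl : (l:ℝ) ≤ μ
      · rw [hswap_tsum (fun m => M ≤ (m:ℝ))]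
        refine (main_est (fun m => M ≤ (m:ℝ)) l k (hside_tail l hl) (hmaskswap _)).trans ?_
        refine (hfinish l k).trans (le_of_eq ?_)
        ring
      · have hkl : k ≠ l := by tauto
        have hzero : (∑' m : ℕ, bcoef L r z m k * bcoef L r z m l) = 0 := by
          rw [htsumf, if_neg hkl]
        have heq : (∑' m : ℕ, if M ≤ (m:ℝ) then bcoef L r z m k * bcoef L r z m l else 0)
            = - (∑' m : ℕ, if (m:ℝ) < M then bcoef L r z m k * bcoef L r z m l else 0) := by
          rw [hzero] at htot
          linarith
        rw [heq, abs_neg]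
        exact (main_est (fun m => (m:ℝ) < M) k l
          (hside_head k (by linarith [not_le.mp hk])) (hmask _)).trans (hfinish k l)
  · -- head bound
    intro hcase
    by_cases hk : μ ≤ (k:ℝ)
    · exact (main_est (fun m => (m:ℝ) < M) k l (hside_head k hk) (hmask _)).trans (hfinish k l)
    · by_cases hl : μ ≤ (l:ℝ)
      · rw [hswap_tsum (fun m => (m:ℝ) < M)]
        refine (main_est (fun m => (m:ℝ) < M) l k (hside_head l hl) (hmaskswap _)).trans ?_
        refine (hfinish l k).trans (le_of_eq ?_)
        ring
      · have hkl : k ≠ l := by tauto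
        have hzero : (∑' m : ℕ, bcoef L r z m k * bcoef L r z m l) = 0 := by
          rw [htsumf, if_neg hkl]
        have heq : (∑' m : ℕ, if (m:ℝ) < M then bcoef L r z m k * bcoef L r z m l else 0)
            = - (∑' m : ℕ, if M ≤ (m:ℝ) then bcoef L r z m k * bcoef L r z m l else 0) := by
          rw [hzero] at htot
          linarith
        rw [heq, abs_neg]
        exact (main_est (fun m => M ≤ (m:ℝ)) k l
          (hside_tail k (by linarith [not_le.mp hk])) (hmask _)).trans (hfinish k l)
end
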